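/- arXiv:1304.4305 — 5 statements merged into one kernel-verified Lean document; each statement's English description precedes it below -/
import Mathlib

section
/- Let k ≥ 0 be an integer and let g_{-k}, …, g_{-1}, g_0, g_1, …, g_k be the zeros of the Legendre polynomial L_{2k+1}; they are 2k+1 distinct points of the open interval (−1,1) and can be indexed so that g_{-i} = −g_i for all i (hence g_0 = 0). Set g_{-k-1} := −1 and g_{k+1} := 1, and for i = −k, …, k define γ_i := ∏_{j=−(k+1), j≠i}^{k} (1−g_j)/(g_i−g_j) + ∏_{j=−k, j≠i}^{k+1} (−1−g_j)/(g_i−g_j). Then every real polynomial v in two variables whose restrictions to the four edges of K̂ = [−1,1]² — i.e. the univariate polynomials v(1,·), v(−1,·), v(·,1), v(·,−1) — have degree ≤ 2k+1 satisfies Σ_{i=−k}^{k} γ_i (v(1,g_i) + v(−1,g_i)) = Σ_{i=−k}^{k} γ_i (v(g_i,1) + v(g_i,−1)). -/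
open Polynomial Finset

/-- The Legendre polynomial of degree `n`, via Rodrigues' formula. -/
noncomputable def legendreP (n : ℕ) : Polynomial ℝ :=
  (((2 : ℝ) ^ n * (Nat.factorial n))⁻¹) •
    Polynomial.derivative^[n] ((Polynomial.X ^ 2 - 1) ^ n)

lemma eval_aeval_fst (t : ℝ) (v : MvPolynomial (Fin 2) ℝ) (c : Polynomial ℝ) :
    Polynomial.eval t (MvPolynomial.aeval ![c, Polynomial.X] v)
      = MvPolynomial.eval ![c.eval t, t] v := by
  have h : (Polynomial.eval t : Polynomial ℝ → ℝ) = ⇑(Polynomial.aeval (R := ℝ) t) := by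
    funext p; rw [Polynomial.coe_aeval_eq_eval]
  rw [h, MvPolynomial.comp_aeval_apply]
  rw [show (fun i => (Polynomial.aeval t) (![c, Polynomial.X] i)) = ![c.eval t, t] by
    funext i; fin_cases i <;> simp [← h]]
  rw [← MvPolynomial.coe_aeval_eq_eval]; rfl

lemma eval_aeval_snd (t : ℝ) (v : MvPolynomial (Fin 2) ℝ) (c : Polynomial ℝ) :
    Polynomial.eval t (MvPolynomial.aeval ![Polynomial.X, c] v)
      = MvPolynomial.eval ![t, c.eval t] v := by
  have h : (Polynomial.eval t : Polynomial ℝ → ℝ) = ⇑(Polynomial.aeval (R := ℝ) t) := by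
    funext p; rw [Polynomial.coe_aeval_eq_eval]
  rw [h, MvPolynomial.comp_aeval_apply]
  rw [show (fun i => (Polynomial.aeval t) (![Polynomial.X, c] i)) = ![t, c.eval t] by
    funext i; fin_cases i <;> simp [← h]]
  rw [← MvPolynomial.coe_aeval_eq_eval]; rfl

lemma key_lemma (k : ℕ) (g : ℤ → ℝ)
    (hmem : ∀ i ∈ Finset.Icc (-(k : ℤ)) (k : ℤ), g i ∈ Set.Ioo (-1 : ℝ) 1)
    (hinj : Set.InjOn g (Finset.Icc (-(k : ℤ)) (k : ℤ)))
    (hsym : ∀ i ∈ Finset.Icc (-(k : ℤ)) (k : ℤ), g (-i) = -g i)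
    (hL : g (-(k : ℤ) - 1) = -1) (hR : g ((k : ℤ) + 1) = 1)
    (γ : ℤ → ℝ)
    (hγ : ∀ i ∈ Finset.Icc (-(k : ℤ)) (k : ℤ), γ i =
      (∏ j ∈ (Finset.Icc (-(k : ℤ) - 1) (k : ℤ)).erase i, (1 - g j) / (g i - g j)) +
      (∏ j ∈ (Finset.Icc (-(k : ℤ)) ((k : ℤ) + 1)).erase i, (-1 - g j) / (g i - g j)))
    (p : Polynomial ℝ) (hp : p.natDegree ≤ 2 * k + 1) :
    ∑ i ∈ Finset.Icc (-(k : ℤ)) (k : ℤ), γ i * p.eval (g i)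
      = 2 * (p.eval 1 + p.eval (-1)) := by
  set I := Finset.Icc (-(k : ℤ)) (k : ℤ) with hI
  set A := Finset.Icc (-(k : ℤ) - 1) (k : ℤ) with hA
  set B := Finset.Icc (-(k : ℤ)) ((k : ℤ) + 1) with hB
  have hcn : (-(k : ℤ) - 1) ∉ I := by simp [hI]
  have hcp : ((k : ℤ) + 1) ∉ I := by simp [hI]
  have hAI : A = insert (-(k : ℤ) - 1) I := by
    ext x; simp [hA, hI]; omega
  have hBI : B = insert ((k : ℤ) + 1) I := by
    ext x; simp [hB, hI]; omega
  have hcardI : I.card = 2 * k + 1 := by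
    rw [hI, Int.card_Icc]; omega
  have hcardA : A.card = 2 * k + 2 := by
    rw [hAI, Finset.card_insert_of_notMem hcn, hcardI]
  have hcardB : B.card = 2 * k + 2 := by
    rw [hBI, Finset.card_insert_of_notMem hcp, hcardI]
  have hne1 : ∀ i ∈ I, g i ≠ 1 := fun i hi => (hmem i hi).2.ne
  have hnem1 : ∀ i ∈ I, g i ≠ -1 := fun i hi => (hmem i hi).1.ne'
  have hinjA : Set.InjOn g A := by
    rw [hAI]
    intro x hx y hy hxy
    simp only [Finset.coe_insert, Set.mem_insert_iff, Finset.mem_coe] at hx hy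
    rcases hx with hx | hx <;> rcases hy with hy | hy
    · rw [hx, hy]
    · exact absurd (by rw [← hxy, hx]; exact hL) (hnem1 y hy)
    · exact absurd (by rw [hxy, hy]; exact hL) (hnem1 x hx)
    · exact hinj hx hy hxy
  have hinjB : Set.InjOn g B := by
    rw [hBI]
    intro x hx y hy hxy
    simp only [Finset.coe_insert, Set.mem_insert_iff, Finset.mem_coe] at hx hy
    rcases hx with hx | hx <;> rcases hy with hy | hy
    · rw [hx, hy]
    · exact absurd (by rw [← hxy, hx]; exact hR) (hne1 y hy)
    · exact absurd (by rw [hxy, hy]; exact hR) (hne1 x hx)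
    · exact hinj hx hy hxy
  have hdeg : p.degree < (2 * k + 2 : ℕ) := by
    calc p.degree ≤ (p.natDegree : WithBot ℕ) := Polynomial.degree_le_natDegree
    _ ≤ ((2 * k + 1 : ℕ) : WithBot ℕ) := by exact_mod_cast hp
    _ < ((2 * k + 2 : ℕ) : WithBot ℕ) := by exact_mod_cast Nat.lt_succ_self _
  have hintA : p.eval 1 = ∑ i ∈ A, p.eval (g i) *
      ∏ j ∈ A.erase i, (1 - g j) / (g i - g j) := by
    conv_lhs => rw [Lagrange.eq_interpolate (f := p) hinjA (hcardA ▸ hdeg)]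
    rw [Lagrange.interpolate_apply, Polynomial.eval_finset_sum]
    refine Finset.sum_congr rfl fun i _ => ?_
    rw [Polynomial.eval_mul, Polynomial.eval_C, Lagrange.basis, Polynomial.eval_prod]
    congr 1
    refine Finset.prod_congr rfl fun j _ => ?_
    simp [Lagrange.basisDivisor, div_eq_mul_inv, mul_comm]
  have hintB : p.eval (-1) = ∑ i ∈ B, p.eval (g i) *
      ∏ j ∈ B.erase i, (-1 - g j) / (g i - g j) := by
    conv_lhs => rw [Lagrange.eq_interpolate (f := p) hinjB (hcardB ▸ hdeg)]
    rw [Lagrange.interpolate_apply, Polynomial.eval_finset_sum]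
    refine Finset.sum_congr rfl fun i _ => ?_
    rw [Polynomial.eval_mul, Polynomial.eval_C, Lagrange.basis, Polynomial.eval_prod]
    congr 1
    refine Finset.prod_congr rfl fun j _ => ?_
    simp [Lagrange.basisDivisor, div_eq_mul_inv, mul_comm]
  have hprodsym : ∏ j ∈ I, (1 - g j) = ∏ j ∈ I, (1 + g j) := by
    rw [Finset.prod_nbij' (i := fun i => -i) (j := fun i => -i)]
    · intro a ha; simp only [hI, Finset.mem_Icc] at ha ⊢; omega
    · intro a ha; simp only [hI, Finset.mem_Icc] at ha ⊢; omega
    · intro a _; ring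
    · intro a _; ring
    · intro a ha
      have hm : -a ∈ I := by simp only [hI, Finset.mem_Icc] at ha ⊢; omega
      rw [show a = -(-a) by ring, hsym (-a) hm]; ring
  have hprodne : ∏ j ∈ I, (1 + g j) ≠ 0 := by
    refine Finset.prod_ne_zero_iff.mpr fun i hi => ?_
    have := (hmem i hi).1; linarith
  have hprodneg : ∏ j ∈ I, (-1 - g j) = -∏ j ∈ I, (1 + g j) := by
    have h1 : ∏ j ∈ I, (-1 - g j) = (-1 : ℝ) ^ I.card * ∏ j ∈ I, (1 + g j) := by
      rw [← Finset.prod_const, ← Finset.prod_mul_distrib]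
      exact Finset.prod_congr rfl fun j _ => by ring
    rw [h1, hcardI, Odd.neg_one_pow ⟨k, by ring⟩]; ring
  have hcA : ∏ j ∈ I, (1 - g j) / (-1 - g j) = -1 := by
    rw [Finset.prod_div_distrib, hprodsym, hprodneg, div_neg, div_self hprodne]
  have hcB : ∏ j ∈ I, (-1 - g j) / (1 - g j) = -1 := by
    rw [Finset.prod_div_distrib, hprodsym, hprodneg, neg_div, div_self hprodne]
  have heraseA : A.erase (-(k : ℤ) - 1) = I := by rw [hAI, Finset.erase_insert hcn]
  have heraseB : B.erase ((k : ℤ) + 1) = I := by rw [hBI, Finset.erase_insert hcp]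
  have hsplitA : p.eval 1 = -p.eval (-1) + ∑ i ∈ I, p.eval (g i) *
      ∏ j ∈ A.erase i, (1 - g j) / (g i - g j) := by
    rw [hintA, hAI, Finset.sum_insert hcn, ← hAI, heraseA]
    congr 1
    rw [hL, hcA]; ring
  have hsplitB : p.eval (-1) = -p.eval 1 + ∑ i ∈ I, p.eval (g i) *
      ∏ j ∈ B.erase i, (-1 - g j) / (g i - g j) := by
    rw [hintB, hBI, Finset.sum_insert hcp, ← hBI, heraseB]
    congr 1
    rw [hR, hcB]; ring
  have hsum : ∑ i ∈ I, γ i * p.eval (g i)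
      = (∑ i ∈ I, p.eval (g i) * ∏ j ∈ A.erase i, (1 - g j) / (g i - g j))
      + ∑ i ∈ I, p.eval (g i) * ∏ j ∈ B.erase i, (-1 - g j) / (g i - g j) := by
    rw [← Finset.sum_add_distrib]
    refine Finset.sum_congr rfl fun i hi => ?_
    rw [hγ i hi]; ring
  rw [hsum]; linarith [hsplitA, hsplitB]

theorem stmt_0 (k : ℕ) (g : ℤ → ℝ)
    (hzero : ∀ i ∈ Finset.Icc (-(k : ℤ)) (k : ℤ),
      (legendreP (2 * k + 1)).eval (g i) = 0)
    (hmem : ∀ i ∈ Finset.Icc (-(k : ℤ)) (k : ℤ), g i ∈ Set.Ioo (-1 : ℝ) 1)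
    (hinj : Set.InjOn g (Finset.Icc (-(k : ℤ)) (k : ℤ)))
    (hsym : ∀ i ∈ Finset.Icc (-(k : ℤ)) (k : ℤ), g (-i) = -g i)
    (hL : g (-(k : ℤ) - 1) = -1) (hR : g ((k : ℤ) + 1) = 1)
    (γ : ℤ → ℝ)
    (hγ : ∀ i ∈ Finset.Icc (-(k : ℤ)) (k : ℤ), γ i =
      (∏ j ∈ (Finset.Icc (-(k : ℤ) - 1) (k : ℤ)).erase i, (1 - g j) / (g i - g j)) +
      (∏ j ∈ (Finset.Icc (-(k : ℤ)) ((k : ℤ) + 1)).erase i, (-1 - g j) / (g i - g j)))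
    (v : MvPolynomial (Fin 2) ℝ)
    (h1 : (MvPolynomial.aeval ![(1 : Polynomial ℝ), Polynomial.X] v).natDegree ≤ 2 * k + 1)
    (h2 : (MvPolynomial.aeval ![(-1 : Polynomial ℝ), Polynomial.X] v).natDegree ≤ 2 * k + 1)
    (h3 : (MvPolynomial.aeval ![(Polynomial.X : Polynomial ℝ), 1] v).natDegree ≤ 2 * k + 1)
    (h4 : (MvPolynomial.aeval ![(Polynomial.X : Polynomial ℝ), -1] v).natDegree ≤ 2 * k + 1) :
    ∑ i ∈ Finset.Icc (-(k : ℤ)) (k : ℤ),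
        γ i * (MvPolynomial.eval ![1, g i] v + MvPolynomial.eval ![-1, g i] v) =
      ∑ i ∈ Finset.Icc (-(k : ℤ)) (k : ℤ),
        γ i * (MvPolynomial.eval ![g i, 1] v + MvPolynomial.eval ![g i, -1] v) := by
  set p1 := MvPolynomial.aeval ![(1 : Polynomial ℝ), Polynomial.X] v with hp1
  set p2 := MvPolynomial.aeval ![(-1 : Polynomial ℝ), Polynomial.X] v with hp2
  set p3 := MvPolynomial.aeval ![(Polynomial.X : Polynomial ℝ), 1] v with hp3
  set p4 := MvPolynomial.aeval ![(Polynomial.X : Polynomial ℝ), -1] v with hp4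
  have e1 : ∀ t : ℝ, p1.eval t = MvPolynomial.eval ![1, t] v := fun t => by
    have := eval_aeval_fst t v 1; simpa using this
  have e2 : ∀ t : ℝ, p2.eval t = MvPolynomial.eval ![-1, t] v := fun t => by
    have := eval_aeval_fst t v (-1); simpa using this
  have e3 : ∀ t : ℝ, p3.eval t = MvPolynomial.eval ![t, 1] v := fun t => by
    have := eval_aeval_snd t v 1; simpa using this
  have e4 : ∀ t : ℝ, p4.eval t = MvPolynomial.eval ![t, -1] v := fun t => by
    have := eval_aeval_snd t v (-1); simpa using this
  have k1 := key_lemma k g hmem hinj hsym hL hR γ hγ p1 h1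
  have k2 := key_lemma k g hmem hinj hsym hL hR γ hγ p2 h2
  have k3 := key_lemma k g hmem hinj hsym hL hR γ hγ p3 h3
  have k4 := key_lemma k g hmem hinj hsym hL hR γ hγ p4 h4
  have hLHS : ∑ i ∈ Finset.Icc (-(k : ℤ)) (k : ℤ),
        γ i * (MvPolynomial.eval ![1, g i] v + MvPolynomial.eval ![-1, g i] v)
      = (∑ i ∈ Finset.Icc (-(k : ℤ)) (k : ℤ), γ i * p1.eval (g i))
        + ∑ i ∈ Finset.Icc (-(k : ℤ)) (k : ℤ), γ i * p2.eval (g i) := by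
    rw [← Finset.sum_add_distrib]
    exact Finset.sum_congr rfl fun i _ => by rw [e1, e2]; ring
  have hRHS : ∑ i ∈ Finset.Icc (-(k : ℤ)) (k : ℤ),
        γ i * (MvPolynomial.eval ![g i, 1] v + MvPolynomial.eval ![g i, -1] v)
      = (∑ i ∈ Finset.Icc (-(k : ℤ)) (k : ℤ), γ i * p3.eval (g i))
        + ∑ i ∈ Finset.Icc (-(k : ℤ)) (k : ℤ), γ i * p4.eval (g i) := by
    rw [← Finset.sum_add_distrib]
    exact Finset.sum_congr rfl fun i _ => by rw [e3, e4]; ring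
  rw [hLHS, hRHS, k1, k2, k3, k4, e1, e1, e2, e2, e3, e3, e4, e4]
  ring
end

section
/- Let k ≥ 0 be an integer and let g_{-k}, …, g_k be 2k+1 distinct points of the open interval (−1,1) with g_{-i} = −g_i for all i (hence g_0 = 0). Set g_{-k-1} := −1 and g_{k+1} := 1, and define γ_i := ∏_{j=−(k+1), j≠i}^{k} (1−g_j)/(g_i−g_j) + ∏_{j=−k, j≠i}^{k+1} (−1−g_j)/(g_i−g_j) for i = −k, …, k. Then for every i with 1 ≤ |i| ≤ k one has γ_i = (2/g_i²) ∏_{j=1, j≠|i|}^{k} (1−g_j²)/(g_i²−g_j²), and γ_0 = 4 ∏_{j=1}^{k} (g_j²−1)/g_j². In particular γ_i ≠ 0 for every i. -/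
set_option maxHeartbeats 1000000 in
theorem stmt_1 (k : ℕ) (g : ℤ → ℝ)
    (hmem : ∀ i ∈ Finset.Icc (-(k : ℤ)) (k : ℤ), g i ∈ Set.Ioo (-1 : ℝ) 1)
    (hinj : Set.InjOn g (Finset.Icc (-(k : ℤ)) (k : ℤ)))
    (hsym : ∀ i ∈ Finset.Icc (-(k : ℤ)) (k : ℤ), g (-i) = -g i)
    (hL : g (-(k : ℤ) - 1) = -1) (hR : g ((k : ℤ) + 1) = 1)
    (γ : ℤ → ℝ)
    (hγ : ∀ i ∈ Finset.Icc (-(k : ℤ)) (k : ℤ), γ i =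
      (∏ j ∈ (Finset.Icc (-(k : ℤ) - 1) (k : ℤ)).erase i, (1 - g j) / (g i - g j)) +
      (∏ j ∈ (Finset.Icc (-(k : ℤ)) ((k : ℤ) + 1)).erase i, (-1 - g j) / (g i - g j))) :
    (∀ i ∈ Finset.Icc (-(k : ℤ)) (k : ℤ), i ≠ 0 →
        γ i = 2 / (g i) ^ 2 *
          ∏ j ∈ (Finset.Icc (1 : ℤ) (k : ℤ)).erase |i|,
            (1 - (g j) ^ 2) / ((g i) ^ 2 - (g j) ^ 2)) ∧
      γ 0 = 4 * ∏ j ∈ Finset.Icc (1 : ℤ) (k : ℤ), ((g j) ^ 2 - 1) / (g j) ^ 2 ∧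
      ∀ i ∈ Finset.Icc (-(k : ℤ)) (k : ℤ), γ i ≠ 0 := by
  have h0mem : (0 : ℤ) ∈ Finset.Icc (-(k : ℤ)) (k : ℤ) := by
    simp only [Finset.mem_Icc]; omega
  have hg0 : g 0 = 0 := by
    have h := hsym 0 h0mem
    simp only [neg_zero] at h
    linarith
  -- index-set lemma for positive i
  have idxpos : ∀ (f : ℤ → ℝ) (i : ℤ), 1 ≤ i → i ≤ (k : ℤ) →
      ∏ j ∈ (Finset.Icc (-(k : ℤ)) (k : ℤ)).erase i, f j
        = f 0 * f (-i) * ∏ j ∈ (Finset.Icc (1 : ℤ) (k : ℤ)).erase i, (f j * f (-j)) := by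
    intro f i h1 h2
    have hset : (Finset.Icc (-(k : ℤ)) (k : ℤ)).erase i
        = Finset.Icc (-(k : ℤ)) 0 ∪ (Finset.Icc (1 : ℤ) (k : ℤ)).erase i := by
      ext x
      simp only [Finset.mem_erase, Finset.mem_Icc, Finset.mem_union]
      omega
    have hdisj : Disjoint (Finset.Icc (-(k : ℤ)) 0) ((Finset.Icc (1 : ℤ) (k : ℤ)).erase i) := by
      rw [Finset.disjoint_left]
      intro a ha hb
      simp only [Finset.mem_Icc] at ha
      simp only [Finset.mem_erase, Finset.mem_Icc] at hb
      omega
    have h0 : Finset.Icc (-(k : ℤ)) 0 = insert 0 (Finset.Icc (-(k : ℤ)) (-1)) := by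
      ext x; simp only [Finset.mem_Icc, Finset.mem_insert]; omega
    have hneg : Finset.Icc (-(k : ℤ)) (-1) = (Finset.Icc (1 : ℤ) (k : ℤ)).image (fun j => -j) := by
      ext x
      simp only [Finset.mem_Icc, Finset.mem_image]
      constructor
      · intro hx; exact ⟨-x, ⟨by omega, by omega⟩, by omega⟩
      · rintro ⟨a, ⟨ha1, ha2⟩, rfl⟩; omega
    rw [hset, Finset.prod_union hdisj, h0,
      Finset.prod_insert (by simp only [Finset.mem_Icc]; omega), hneg,
      Finset.prod_image (by intro a _ b _ hab; exact neg_inj.mp hab),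
      ← Finset.mul_prod_erase _ (fun j => f (-j))
        (show i ∈ Finset.Icc (1 : ℤ) (k : ℤ) by simp only [Finset.mem_Icc]; omega),
      Finset.prod_mul_distrib]
    ring
  -- index-set lemma for i = 0
  have idx0 : ∀ f : ℤ → ℝ,
      ∏ j ∈ (Finset.Icc (-(k : ℤ)) (k : ℤ)).erase 0, f j
        = ∏ j ∈ Finset.Icc (1 : ℤ) (k : ℤ), (f j * f (-j)) := by
    intro f
    have hset : (Finset.Icc (-(k : ℤ)) (k : ℤ)).erase 0
        = Finset.Icc (-(k : ℤ)) (-1) ∪ Finset.Icc (1 : ℤ) (k : ℤ) := by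
      ext x
      simp only [Finset.mem_erase, Finset.mem_Icc, Finset.mem_union]
      omega
    have hdisj : Disjoint (Finset.Icc (-(k : ℤ)) (-1)) (Finset.Icc (1 : ℤ) (k : ℤ)) := by
      rw [Finset.disjoint_left]
      intro a ha hb
      simp only [Finset.mem_Icc] at ha hb
      omega
    have hneg : Finset.Icc (-(k : ℤ)) (-1) = (Finset.Icc (1 : ℤ) (k : ℤ)).image (fun j => -j) := by
      ext x
      simp only [Finset.mem_Icc, Finset.mem_image]
      constructor
      · intro hx; exact ⟨-x, ⟨by omega, by omega⟩, by omega⟩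
      · rintro ⟨a, ⟨ha1, ha2⟩, rfl⟩; omega
    rw [hset, Finset.prod_union hdisj, hneg,
      Finset.prod_image (by intro a _ b _ hab; exact neg_inj.mp hab),
      Finset.prod_mul_distrib]
    ring
  -- combined index-set lemma for i ≠ 0
  have idx : ∀ (f : ℤ → ℝ) (i : ℤ), i ∈ Finset.Icc (-(k : ℤ)) (k : ℤ) → i ≠ 0 →
      ∏ j ∈ (Finset.Icc (-(k : ℤ)) (k : ℤ)).erase i, f j
        = f 0 * f (-i) * ∏ j ∈ (Finset.Icc (1 : ℤ) (k : ℤ)).erase |i|, (f j * f (-j)) := by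
    intro f i hi hi0
    simp only [Finset.mem_Icc] at hi
    rcases lt_or_gt_of_ne hi0 with hneg | hpos
    · have himg : (Finset.Icc (-(k : ℤ)) (k : ℤ)).erase i
          = ((Finset.Icc (-(k : ℤ)) (k : ℤ)).erase (-i)).image (fun j => -j) := by
        ext x
        simp only [Finset.mem_erase, Finset.mem_Icc, Finset.mem_image]
        constructor
        · intro hx; exact ⟨-x, ⟨by omega, by omega, by omega⟩, by omega⟩
        · rintro ⟨a, ⟨ha1, ha2, ha3⟩, rfl⟩
          constructor <;> omega
      rw [himg, Finset.prod_image (by intro a _ b _ hab; exact neg_inj.mp hab),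
        idxpos (fun j => f (-j)) (-i) (by omega) (by omega)]
      simp only [neg_zero, neg_neg]
      rw [abs_of_neg hneg]
      congr 1
      exact Finset.prod_congr rfl (fun j _ => mul_comm _ _)
    · rw [idxpos f i (by omega) (by omega), abs_of_pos hpos]
  -- formula for i ≠ 0
  have hformula : ∀ i ∈ Finset.Icc (-(k : ℤ)) (k : ℤ), i ≠ 0 →
      γ i = 2 / (g i) ^ 2 *
        ∏ j ∈ (Finset.Icc (1 : ℤ) (k : ℤ)).erase |i|,
          (1 - (g j) ^ 2) / ((g i) ^ 2 - (g j) ^ 2) := by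
    intro i hi hi0
    obtain ⟨hgi1, hgi2⟩ := hmem i hi
    have hgi0 : g i ≠ 0 := by
      intro h
      exact hi0 (hinj (Finset.mem_coe.mpr hi) (Finset.mem_coe.mpr h0mem) (by rw [h, hg0]))
    have hik := Finset.mem_Icc.mp hi
    have hAset : (Finset.Icc (-(k : ℤ) - 1) (k : ℤ)).erase i
        = insert (-(k : ℤ) - 1) ((Finset.Icc (-(k : ℤ)) (k : ℤ)).erase i) := by
      ext x
      simp only [Finset.mem_erase, Finset.mem_Icc, Finset.mem_insert]
      omega
    have hBset : (Finset.Icc (-(k : ℤ)) ((k : ℤ) + 1)).erase i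
        = insert ((k : ℤ) + 1) ((Finset.Icc (-(k : ℤ)) (k : ℤ)).erase i) := by
      ext x
      simp only [Finset.mem_erase, Finset.mem_Icc, Finset.mem_insert]
      omega
    have hnotA : -(k : ℤ) - 1 ∉ (Finset.Icc (-(k : ℤ)) (k : ℤ)).erase i := by
      simp only [Finset.mem_erase, Finset.mem_Icc]
      omega
    have hnotB : (k : ℤ) + 1 ∉ (Finset.Icc (-(k : ℤ)) (k : ℤ)).erase i := by
      simp only [Finset.mem_erase, Finset.mem_Icc]
      omega
    rw [hγ i hi, hAset, hBset, Finset.prod_insert hnotA, Finset.prod_insert hnotB, hL, hR,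
      idx (fun j => (1 - g j) / (g i - g j)) i hi hi0,
      idx (fun j => (-1 - g j) / (g i - g j)) i hi hi0,
      hsym i hi, hg0]
    have hprod1 : ∏ j ∈ (Finset.Icc (1 : ℤ) (k : ℤ)).erase |i|,
        ((1 - g j) / (g i - g j) * ((1 - g (-j)) / (g i - g (-j))))
        = ∏ j ∈ (Finset.Icc (1 : ℤ) (k : ℤ)).erase |i|,
          (1 - (g j) ^ 2) / ((g i) ^ 2 - (g j) ^ 2) := by
      refine Finset.prod_congr rfl (fun j hj => ?_)
      have hjmem : j ∈ Finset.Icc (-(k : ℤ)) (k : ℤ) := by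
        simp only [Finset.mem_erase, Finset.mem_Icc] at hj ⊢
        omega
      rw [hsym j hjmem, div_mul_div_comm]
      congr 1 <;> ring
    have hprod2 : ∏ j ∈ (Finset.Icc (1 : ℤ) (k : ℤ)).erase |i|,
        ((-1 - g j) / (g i - g j) * ((-1 - g (-j)) / (g i - g (-j))))
        = ∏ j ∈ (Finset.Icc (1 : ℤ) (k : ℤ)).erase |i|,
          (1 - (g j) ^ 2) / ((g i) ^ 2 - (g j) ^ 2) := by
      refine Finset.prod_congr rfl (fun j hj => ?_)
      have hjmem : j ∈ Finset.Icc (-(k : ℤ)) (k : ℤ) := by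
        simp only [Finset.mem_erase, Finset.mem_Icc] at hj ⊢
        omega
      rw [hsym j hjmem, div_mul_div_comm]
      congr 1 <;> ring
    rw [hprod1, hprod2]
    have h1 : g i - -1 ≠ 0 := by intro h; linarith
    have h2 : g i - 1 ≠ 0 := by intro h; linarith
    have h0' : g i - 0 ≠ 0 := by intro h; apply hgi0; linarith
    have h3 : g i - -g i ≠ 0 := by intro h; apply hgi0; linarith
    have key1 : (1 - -1 : ℝ) / (g i - -1) *
        ((1 - 0) / (g i - 0) * ((1 - -g i) / (g i - -g i))) = 1 / (g i) ^ 2 := by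
      rw [div_mul_div_comm, div_mul_div_comm,
        div_eq_div_iff (mul_ne_zero h1 (mul_ne_zero h0' h3)) (pow_ne_zero 2 hgi0)]
      ring
    have key2 : (-1 - 1 : ℝ) / (g i - 1) *
        ((-1 - 0) / (g i - 0) * ((-1 - -g i) / (g i - -g i))) = 1 / (g i) ^ 2 := by
      rw [div_mul_div_comm, div_mul_div_comm,
        div_eq_div_iff (mul_ne_zero h2 (mul_ne_zero h0' h3)) (pow_ne_zero 2 hgi0)]
      ring
    set P := ∏ j ∈ (Finset.Icc (1 : ℤ) (k : ℤ)).erase |i|,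
      (1 - (g j) ^ 2) / ((g i) ^ 2 - (g j) ^ 2) with hPdef
    linear_combination P * key1 + P * key2
  -- formula for i = 0
  have hformula0 : γ 0 = 4 * ∏ j ∈ Finset.Icc (1 : ℤ) (k : ℤ), ((g j) ^ 2 - 1) / (g j) ^ 2 := by
    have hAset : (Finset.Icc (-(k : ℤ) - 1) (k : ℤ)).erase 0
        = insert (-(k : ℤ) - 1) ((Finset.Icc (-(k : ℤ)) (k : ℤ)).erase 0) := by
      ext x
      simp only [Finset.mem_erase, Finset.mem_Icc, Finset.mem_insert]
      omega
    have hBset : (Finset.Icc (-(k : ℤ)) ((k : ℤ) + 1)).erase 0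
        = insert ((k : ℤ) + 1) ((Finset.Icc (-(k : ℤ)) (k : ℤ)).erase 0) := by
      ext x
      simp only [Finset.mem_erase, Finset.mem_Icc, Finset.mem_insert]
      omega
    have hnotA : -(k : ℤ) - 1 ∉ (Finset.Icc (-(k : ℤ)) (k : ℤ)).erase 0 := by
      simp only [Finset.mem_erase, Finset.mem_Icc]
      omega
    have hnotB : (k : ℤ) + 1 ∉ (Finset.Icc (-(k : ℤ)) (k : ℤ)).erase 0 := by
      simp only [Finset.mem_erase, Finset.mem_Icc]
      omega
    rw [hγ 0 h0mem, hAset, hBset, Finset.prod_insert hnotA, Finset.prod_insert hnotB, hL, hR]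
    simp only [hg0]
    rw [idx0 (fun j => (1 - g j) / (0 - g j)), idx0 (fun j => (-1 - g j) / (0 - g j))]
    have hprod1 : ∏ j ∈ Finset.Icc (1 : ℤ) (k : ℤ),
        ((1 - g j) / (0 - g j) * ((1 - g (-j)) / (0 - g (-j))))
        = ∏ j ∈ Finset.Icc (1 : ℤ) (k : ℤ), ((g j) ^ 2 - 1) / (g j) ^ 2 := by
      refine Finset.prod_congr rfl (fun j hj => ?_)
      have hjmem : j ∈ Finset.Icc (-(k : ℤ)) (k : ℤ) := by
        simp only [Finset.mem_Icc] at hj ⊢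
        omega
      rw [hsym j hjmem, div_mul_div_comm,
        show (1 - g j) * (1 - -g j) = -((g j) ^ 2 - 1) by ring,
        show (0 - g j) * (0 - -g j) = -((g j) ^ 2) by ring,
        neg_div_neg_eq]
    have hprod2 : ∏ j ∈ Finset.Icc (1 : ℤ) (k : ℤ),
        ((-1 - g j) / (0 - g j) * ((-1 - g (-j)) / (0 - g (-j))))
        = ∏ j ∈ Finset.Icc (1 : ℤ) (k : ℤ), ((g j) ^ 2 - 1) / (g j) ^ 2 := by
      refine Finset.prod_congr rfl (fun j hj => ?_)
      have hjmem : j ∈ Finset.Icc (-(k : ℤ)) (k : ℤ) := by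
        simp only [Finset.mem_Icc] at hj ⊢
        omega
      rw [hsym j hjmem, div_mul_div_comm,
        show (-1 - g j) * (-1 - -g j) = -((g j) ^ 2 - 1) by ring,
        show (0 - g j) * (0 - -g j) = -((g j) ^ 2) by ring,
        neg_div_neg_eq]
    rw [hprod1, hprod2]
    norm_num
    ring
  refine ⟨hformula, hformula0, ?_⟩
  intro i hi
  by_cases hi0 : i = 0
  · subst hi0
    rw [hformula0]
    apply mul_ne_zero (by norm_num)
    rw [Finset.prod_ne_zero_iff]
    intro j hj
    have hjmem : j ∈ Finset.Icc (-(k : ℤ)) (k : ℤ) := by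
      simp only [Finset.mem_Icc] at hj ⊢
      omega
    have hj0 : j ≠ 0 := by
      simp only [Finset.mem_Icc] at hj
      omega
    obtain ⟨hg1, hg2⟩ := hmem j hjmem
    have hgj0 : g j ≠ 0 := by
      intro h
      exact hj0 (hinj (Finset.mem_coe.mpr hjmem) (Finset.mem_coe.mpr h0mem) (by rw [h, hg0]))
    apply div_ne_zero
    · intro h; nlinarith
    · exact pow_ne_zero 2 hgj0
  · rw [hformula i hi hi0]
    obtain ⟨hgi1, hgi2⟩ := hmem i hi
    have hgi0 : g i ≠ 0 := by
      intro h
      exact hi0 (hinj (Finset.mem_coe.mpr hi) (Finset.mem_coe.mpr h0mem) (by rw [h, hg0]))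
    apply mul_ne_zero (div_ne_zero two_ne_zero (pow_ne_zero 2 hgi0))
    rw [Finset.prod_ne_zero_iff]
    intro j hj
    simp only [Finset.mem_erase, Finset.mem_Icc] at hj
    obtain ⟨hjabs, hj1, hjk⟩ := hj
    have hjmem : j ∈ Finset.Icc (-(k : ℤ)) (k : ℤ) := by
      simp only [Finset.mem_Icc]
      omega
    have himem := Finset.mem_Icc.mp hi
    have hmi : -i ∈ Finset.Icc (-(k : ℤ)) (k : ℤ) := by
      simp only [Finset.mem_Icc]
      omega
    obtain ⟨hg1, hg2⟩ := hmem j hjmem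
    have habs : j ≠ i ∧ j ≠ -i := by
      rcases le_or_gt 0 i with h' | h'
      · rw [abs_of_nonneg h'] at hjabs
        omega
      · rw [abs_of_neg h'] at hjabs
        omega
    have hne1 : g j ≠ g i := by
      intro h
      exact habs.1 (hinj (Finset.mem_coe.mpr hjmem) (Finset.mem_coe.mpr hi) h)
    have hne2 : g j ≠ -g i := by
      intro h
      have h' : g j = g (-i) := by rw [hsym i hi, h]
      exact habs.2 (hinj (Finset.mem_coe.mpr hjmem) (Finset.mem_coe.mpr hmi) h')
    apply div_ne_zero
    · intro h; nlinarith
    · intro h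
      have hfac : (g i - g j) * (g i + g j) = 0 := by linear_combination h
      rcases mul_eq_zero.mp hfac with h' | h'
      · exact hne1 (by linarith)
      · exact hne2 (by linarith)
end

section
/- Let k ≥ 0, m = 2k+1, and let g_{-k}, …, g_k be the zeros of the Legendre polynomial L_{2k+1}, which are 2k+1 distinct points of (−1,1) indexed so that g_{-i} = −g_i (hence g_0 = 0). Let G := {(1,g_i), (−1,g_i), (g_i,1), (g_i,−1) : i = −k, …, k} and let I be a finite subset of the open square (−1,1)² such that the only polynomial of total degree ≤ 2k−3 vanishing at every point of I is the zero polynomial. If v ∈ R_m(K̂) vanishes at every point of G ∪ I, then v is the zero polynomial. -/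
open Polynomial

noncomputable def Tmap : MvPolynomial (Fin 2) ℝ →+* Polynomial (Polynomial ℝ) :=
  (MvPolynomial.aeval (R := ℝ)
    ![(Polynomial.C Polynomial.X : Polynomial (Polynomial ℝ)), Polynomial.X]).toRingHom

noncomputable def Umap : Polynomial (Polynomial ℝ) →+* MvPolynomial (Fin 2) ℝ :=
  Polynomial.eval₂RingHom
    (Polynomial.eval₂RingHom MvPolynomial.C (MvPolynomial.X 0)) (MvPolynomial.X 1)

lemma Umap_Tmap (w : MvPolynomial (Fin 2) ℝ) : Umap (Tmap w) = w := by
  have : Umap.comp Tmap = RingHom.id _ := by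
    apply MvPolynomial.ringHom_ext
    · intro r
      simp [Tmap, Umap]
    · intro i
      fin_cases i <;> simp [Tmap, Umap]
  exact DFunLike.congr_fun this w

lemma eval_Tmap (w : MvPolynomial (Fin 2) ℝ) (s t : ℝ) :
    ((Tmap w).map (evalRingHom s)).eval t = MvPolynomial.eval ![s, t] w := by
  have : (Polynomial.evalRingHom t).comp ((Polynomial.mapRingHom (evalRingHom s)).comp Tmap)
      = (MvPolynomial.eval ![s, t] : MvPolynomial (Fin 2) ℝ →+* ℝ) := by
    apply MvPolynomial.ringHom_ext
    · intro r; simp [Tmap]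
    · intro i; fin_cases i <;> simp [Tmap]
  exact DFunLike.congr_fun this w

lemma evalC_Tmap (w : MvPolynomial (Fin 2) ℝ) (s t : ℝ) :
    ((Tmap w).eval (Polynomial.C t)).eval s = MvPolynomial.eval ![s, t] w := by
  have : (Polynomial.evalRingHom s).comp
      ((Polynomial.evalRingHom (Polynomial.C t)).comp Tmap)
      = (MvPolynomial.eval ![s, t] : MvPolynomial (Fin 2) ℝ →+* ℝ) := by
    apply MvPolynomial.ringHom_ext
    · intro r; simp [Tmap]
    · intro i; fin_cases i <;> simp [Tmap]
  exact DFunLike.congr_fun this w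


lemma Tmap_monomial (d : Fin 2 →₀ ℕ) (c : ℝ) :
    Tmap (MvPolynomial.monomial d c)
      = Polynomial.monomial (d 1) (Polynomial.C c * Polynomial.X ^ (d 0)) := by
  show (MvPolynomial.aeval _) _ = _
  rw [MvPolynomial.aeval_monomial, Finsupp.prod_fintype _ _ (fun _ => pow_zero _),
    Fin.prod_univ_two]
  simp only [Matrix.cons_val_zero, Matrix.cons_val_one, Matrix.head_cons]
  rw [← Polynomial.C_mul_X_pow_eq_monomial, ← Polynomial.C_pow,
    Polynomial.algebraMap_apply, Polynomial.algebraMap_eq, ← mul_assoc, ← Polynomial.C_mul]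

lemma sum_fin2 (d : Fin 2 →₀ ℕ) : (d.sum fun _ e => e) = d 0 + d 1 := by
  rw [Finsupp.sum_fintype _ _ (fun _ => rfl), Fin.sum_univ_two]

lemma mem_support_le (w : MvPolynomial (Fin 2) ℝ) {d : Fin 2 →₀ ℕ} (hd : d ∈ w.support) :
    d 0 + d 1 ≤ w.totalDegree := by
  rw [← sum_fin2]; exact MvPolynomial.le_totalDegree hd

lemma Tmap_natDegree_le (w : MvPolynomial (Fin 2) ℝ) (n : ℕ) (h : w.totalDegree ≤ n) :
    (Tmap w).natDegree ≤ n := by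
  rw [MvPolynomial.as_sum w, map_sum]
  apply Polynomial.natDegree_sum_le_of_forall_le
  intro d hd
  rw [Tmap_monomial]
  refine (Polynomial.natDegree_monomial_le _).trans ?_
  have := mem_support_le w hd
  omega

lemma Tmap_coeff_natDegree_le (w : MvPolynomial (Fin 2) ℝ) (n j : ℕ) (h : w.totalDegree ≤ n) :
    ((Tmap w).coeff j).natDegree ≤ n - j := by
  conv_lhs => rw [MvPolynomial.as_sum w]
  rw [map_sum, Polynomial.finset_sum_coeff]
  apply Polynomial.natDegree_sum_le_of_forall_le
  intro d hd
  rw [Tmap_monomial, Polynomial.coeff_monomial]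
  split
  · next heq =>
    refine (Polynomial.natDegree_C_mul_le _ _).trans ?_
    rw [Polynomial.natDegree_X_pow]
    have := mem_support_le w hd
    omega
  · simp

noncomputable def qpoly (k : ℕ) : MvPolynomial (Fin 2) ℝ :=
  MvPolynomial.X 0 ^ (2 * k + 1) * MvPolynomial.X 1 -
    MvPolynomial.X 0 * MvPolynomial.X 1 ^ (2 * k + 1)

lemma Tmap_qpoly (k : ℕ) :
    Tmap (qpoly k) = Polynomial.C (Polynomial.X ^ (2 * k + 1)) * Polynomial.X -
      Polynomial.C Polynomial.X * Polynomial.X ^ (2 * k + 1) := by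
  show (MvPolynomial.aeval _) _ = _
  simp only [qpoly, map_sub, map_mul, map_pow, MvPolynomial.aeval_X, Matrix.cons_val_zero,
    Matrix.cons_val_one, Matrix.head_cons]

lemma qpoly_zero : qpoly 0 = 0 := by
  simp [qpoly]

lemma Tmap_qpoly_coeff (k : ℕ) (hk : 1 ≤ k) :
    (Tmap (qpoly k)).coeff (2 * k + 1) = -Polynomial.X := by
  rw [Tmap_qpoly, Polynomial.coeff_sub, Polynomial.coeff_C_mul, Polynomial.coeff_C_mul,
    Polynomial.coeff_X, Polynomial.coeff_X_pow]
  rw [if_neg (by omega), if_pos rfl, mul_zero, mul_one, zero_sub]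

lemma Tmap_natDegree_qpoly (k : ℕ) : (Tmap (qpoly k)).natDegree ≤ 2 * k + 1 := by
  rw [Tmap_qpoly]
  refine (Polynomial.natDegree_sub_le _ _).trans ?_
  refine max_le ((Polynomial.natDegree_mul_le).trans ?_) ((Polynomial.natDegree_mul_le).trans ?_) <;>
    simp [Polynomial.natDegree_X_le]

noncomputable def Phi (k : ℕ) (g : ℤ → ℝ) : Polynomial ℝ :=
  ∏ i ∈ Finset.Icc (-(k:ℤ)) (k:ℤ), (Polynomial.X - Polynomial.C (g i))

lemma Phi_monic (k : ℕ) (g : ℤ → ℝ) : (Phi k g).Monic :=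
  Polynomial.monic_prod_of_monic _ _ fun _ _ => Polynomial.monic_X_sub_C _

lemma card_Icc_k (k : ℕ) : (Finset.Icc (-(k:ℤ)) (k:ℤ)).card = 2 * k + 1 := by
  rw [Int.card_Icc]; omega

lemma Phi_natDegree (k : ℕ) (g : ℤ → ℝ) : (Phi k g).natDegree = 2 * k + 1 := by
  rw [Phi, Polynomial.natDegree_prod_of_monic _ _ (fun _ _ => Polynomial.monic_X_sub_C _)]
  simp [Polynomial.natDegree_X_sub_C, card_Icc_k k]

lemma Phi_eval_one_pos (k : ℕ) (g : ℤ → ℝ)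
    (hmem : ∀ i ∈ Finset.Icc (-(k : ℤ)) (k : ℤ), g i ∈ Set.Ioo (-1 : ℝ) 1) :
    0 < (Phi k g).eval 1 := by
  rw [Phi, Polynomial.eval_prod]
  apply Finset.prod_pos
  intro i hi
  have := (hmem i hi).2
  simp only [Polynomial.eval_sub, Polynomial.eval_X, Polynomial.eval_C]
  linarith

lemma Phi_eval_neg_one (k : ℕ) (g : ℤ → ℝ)
    (hsym : ∀ i ∈ Finset.Icc (-(k : ℤ)) (k : ℤ), g (-i) = -g i) :
    (Phi k g).eval (-1) = -(Phi k g).eval 1 := by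
  rw [Phi, Polynomial.eval_prod, Polynomial.eval_prod]
  have h1 : ∀ i ∈ Finset.Icc (-(k : ℤ)) (k : ℤ),
      Polynomial.eval (-1) (Polynomial.X - Polynomial.C (g i)) = (-1) * (1 - g (-i)) := by
    intro i hi
    rw [hsym i hi]
    simp; ring
  rw [Finset.prod_congr rfl h1, Finset.prod_mul_distrib, Finset.prod_const, card_Icc_k k]
  have h2 : ∏ i ∈ Finset.Icc (-(k:ℤ)) (k:ℤ), (1 - g (-i))
      = ∏ i ∈ Finset.Icc (-(k:ℤ)) (k:ℤ), (1 - g i) := by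
    apply Finset.prod_nbij' (fun i => -i) (fun i => -i) <;>
      simp [Finset.mem_Icc] <;> omega
  rw [h2, Odd.neg_one_pow ⟨k, by ring⟩]
  have h3 : ∀ i ∈ Finset.Icc (-(k : ℤ)) (k : ℤ),
      (1 : ℝ) - g i = Polynomial.eval 1 (Polynomial.X - Polynomial.C (g i)) := by
    intro i hi; simp
  rw [Finset.prod_congr rfl h3]
  ring

lemma edge_univ (k : ℕ) (g : ℤ → ℝ)
    (hinj : Set.InjOn g (Finset.Icc (-(k : ℤ)) (k : ℤ)))
    (f : Polynomial ℝ) (hdeg : f.natDegree ≤ 2 * k + 1)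
    (hroots : ∀ i ∈ Finset.Icc (-(k : ℤ)) (k : ℤ), f.eval (g i) = 0) :
    f = Polynomial.C (f.coeff (2 * k + 1)) * Phi k g := by
  have hdvd : Phi k g ∣ f := by
    rw [Phi]
    apply Finset.prod_dvd_of_coprime
    · intro i hi j hj hij
      exact Polynomial.isCoprime_X_sub_C_of_isUnit_sub
        (sub_ne_zero.mpr (fun h => hij (hinj hi hj h))).isUnit
    · intro i hi
      exact Polynomial.dvd_iff_isRoot.mpr (hroots i hi)
  obtain ⟨d, hd⟩ := hdvd
  rcases eq_or_ne f 0 with hf | hf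
  · rw [hf, Polynomial.coeff_zero, map_zero, zero_mul]
  · have hΦ : Phi k g ≠ 0 := (Phi_monic k g).ne_zero
    have hdne : d ≠ 0 := by rintro rfl; simp at hd; exact hf hd
    have hnd : d.natDegree = 0 := by
      have := Polynomial.natDegree_mul hΦ hdne
      rw [← hd, Phi_natDegree k g] at this
      omega
    obtain ⟨e, rfl⟩ := Polynomial.natDegree_eq_zero.mp hnd
    have hc : f.coeff (2 * k + 1) = e := by
      rw [hd, Polynomial.coeff_mul_C, ← Phi_natDegree k g,
        (Phi_monic k g).coeff_natDegree, one_mul]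
    rw [hc, mul_comm]; exact hd

lemma X_sub_C_ne_zero' (i : Fin 2) (c : ℝ) :
    (MvPolynomial.X i - MvPolynomial.C c : MvPolynomial (Fin 2) ℝ) ≠ 0 := by
  intro h
  have := congrArg (MvPolynomial.coeff (Finsupp.single i 1)) h
  simp [MvPolynomial.coeff_X', MvPolynomial.coeff_C, eq_comm, Finsupp.single_eq_zero] at this

lemma tdfac (i : Fin 2) (c : ℝ) (ψ : MvPolynomial (Fin 2) ℝ) (h : ψ ≠ 0) :
    ((MvPolynomial.X i - MvPolynomial.C c) * ψ).totalDegree = ψ.totalDegree + 1 := by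
  apply le_antisymm
  · refine (MvPolynomial.totalDegree_mul _ _).trans ?_
    have : (MvPolynomial.X i - MvPolynomial.C c :
        MvPolynomial (Fin 2) ℝ).totalDegree ≤ 1 := by
      rw [sub_eq_add_neg, ← map_neg]
      refine (MvPolynomial.totalDegree_add _ _).trans ?_
      simp [MvPolynomial.totalDegree_X, MvPolynomial.totalDegree_C]
    omega
  · obtain ⟨d, hd, hds⟩ := Finset.exists_mem_eq_sup ψ.support
      (Finset.nonempty_iff_ne_empty.mpr (MvPolynomial.support_eq_empty.not.mpr h)) (fun d => d.sum fun _ e => e)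
    have htd : ψ.totalDegree = d 0 + d 1 := by
      rw [MvPolynomial.totalDegree, hds, sum_fin2]
    have hsum : (Finsupp.single i 1 + d).sum (fun _ e => e) = ψ.totalDegree + 1 := by
      rw [sum_fin2, htd]
      rcases i with ⟨iv, hiv⟩
      interval_cases iv <;>
        simp [Finsupp.add_apply, Finsupp.single_apply] <;> omega
    have hnotmem : MvPolynomial.coeff (Finsupp.single i 1 + d) ψ = 0 := by
      by_contra hmem
      have := MvPolynomial.le_totalDegree (MvPolynomial.mem_support_iff.mpr hmem)
      rw [hsum] at this
      omega
    have hco : MvPolynomial.coeff (Finsupp.single i 1 + d)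
        ((MvPolynomial.X i - MvPolynomial.C c) * ψ) ≠ 0 := by
      rw [sub_mul, MvPolynomial.coeff_sub, MvPolynomial.coeff_X_mul,
        MvPolynomial.coeff_C_mul, hnotmem, mul_zero, sub_zero]
      exact MvPolynomial.mem_support_iff.mp hd
    have := MvPolynomial.le_totalDegree (MvPolynomial.mem_support_iff.mpr hco)
    rw [hsum] at this
    exact this

lemma Tmap_C (a : ℝ) : Tmap (MvPolynomial.C a) = Polynomial.C (Polynomial.C a) := by
  show (MvPolynomial.aeval _) _ = _
  simp [Polynomial.algebraMap_apply]

lemma Eodd (k : ℕ) : ((Tmap (qpoly k)).coeff (2 * k + 1)).eval (-1)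
    = -((Tmap (qpoly k)).coeff (2 * k + 1)).eval 1 := by
  rcases Nat.eq_zero_or_pos k with hk | hk
  · subst hk; rw [qpoly_zero]; simp
  · rw [Tmap_qpoly_coeff k hk]; simp

lemma edge (k : ℕ) (g : ℤ → ℝ)
    (hinj : Set.InjOn g (Finset.Icc (-(k : ℤ)) (k : ℤ)))
    (w pp : MvPolynomial (Fin 2) ℝ) (a : ℝ)
    (hpp : pp.totalDegree ≤ 2 * k + 1)
    (hw : w = pp + MvPolynomial.C a * qpoly k)
    (hvan : ∀ i ∈ Finset.Icc (-(k : ℤ)) (k : ℤ),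
      MvPolynomial.eval ![1, g i] w = 0 ∧ MvPolynomial.eval ![-1, g i] w = 0) :
    ∃ c₁ c₂ B : ℝ,
      (Tmap w).map (evalRingHom 1) = Polynomial.C c₁ * Phi k g ∧
      (Tmap w).map (evalRingHom (-1)) = Polynomial.C c₂ * Phi k g ∧
      c₁ = B + a * ((Tmap (qpoly k)).coeff (2 * k + 1)).eval 1 ∧
      c₂ = B - a * ((Tmap (qpoly k)).coeff (2 * k + 1)).eval 1 := by
  have hndw : (Tmap w).natDegree ≤ 2 * k + 1 := by
    rw [hw, map_add, map_mul, Tmap_C]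
    refine (Polynomial.natDegree_add_le _ _).trans (max_le (Tmap_natDegree_le pp _ hpp) ?_)
    refine (Polynomial.natDegree_mul_le).trans ?_
    simpa using Tmap_natDegree_qpoly k
  have key : ∀ s : ℝ, (∀ i ∈ Finset.Icc (-(k : ℤ)) (k : ℤ),
      MvPolynomial.eval ![s, g i] w = 0) →
      (Tmap w).map (evalRingHom s)
        = Polynomial.C (((Tmap w).coeff (2 * k + 1)).eval s) * Phi k g := by
    intro s hs
    have hdeg : ((Tmap w).map (evalRingHom s)).natDegree ≤ 2 * k + 1 :=
      Polynomial.natDegree_map_le.trans hndw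
    have hroots : ∀ i ∈ Finset.Icc (-(k : ℤ)) (k : ℤ),
        ((Tmap w).map (evalRingHom s)).eval (g i) = 0 := by
      intro i hi; rw [eval_Tmap]; exact hs i hi
    have := edge_univ k g hinj _ hdeg hroots
    rwa [Polynomial.coeff_map, coe_evalRingHom] at this
  have hcoeff : (Tmap w).coeff (2 * k + 1)
      = Polynomial.C (((Tmap pp).coeff (2 * k + 1)).coeff 0)
        + Polynomial.C a * (Tmap (qpoly k)).coeff (2 * k + 1) := by
    have h0 : (Tmap pp).coeff (2 * k + 1) = Polynomial.C (((Tmap pp).coeff (2 * k + 1)).coeff 0) := by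
      apply Polynomial.eq_C_of_natDegree_le_zero
      simpa using Tmap_coeff_natDegree_le pp (2 * k + 1) (2 * k + 1) hpp
    rw [hw, map_add, map_mul, Tmap_C, Polynomial.coeff_add, Polynomial.coeff_C_mul, ← h0]
  refine ⟨_, _, ((Tmap pp).coeff (2 * k + 1)).coeff 0,
    key 1 (fun i hi => (hvan i hi).1), key (-1) (fun i hi => (hvan i hi).2), ?_, ?_⟩
  · rw [hcoeff]; simp
  · rw [hcoeff]; simp [Eodd k]; ring

theorem stmt_2 (k : ℕ) (g : ℤ → ℝ)
    (hzero : ∀ i ∈ Finset.Icc (-(k : ℤ)) (k : ℤ),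
      (legendreP (2 * k + 1)).eval (g i) = 0)
    (hmem : ∀ i ∈ Finset.Icc (-(k : ℤ)) (k : ℤ), g i ∈ Set.Ioo (-1 : ℝ) 1)
    (hinj : Set.InjOn g (Finset.Icc (-(k : ℤ)) (k : ℤ)))
    (hsym : ∀ i ∈ Finset.Icc (-(k : ℤ)) (k : ℤ), g (-i) = -g i)
    (I : Finset (ℝ × ℝ))
    (hI : ∀ r ∈ I, r.1 ∈ Set.Ioo (-1 : ℝ) 1 ∧ r.2 ∈ Set.Ioo (-1 : ℝ) 1)
    (hunisolv : ∀ q : MvPolynomial (Fin 2) ℝ,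
      (∀ d ∈ q.support, ((d 0 + d 1 : ℕ) : ℤ) ≤ 2 * (k : ℤ) - 3) →
      (∀ r ∈ I, MvPolynomial.eval ![r.1, r.2] q = 0) → q = 0)
    -- v ∈ R_m(K̂) with m = 2k+1
    (v p : MvPolynomial (Fin 2) ℝ) (a₀ : ℝ)
    (hp : p.totalDegree ≤ 2 * k + 1)
    (hv : v = p + MvPolynomial.C a₀ *
      (MvPolynomial.X 0 ^ (2 * k + 1) * MvPolynomial.X 1 -
        MvPolynomial.X 0 * MvPolynomial.X 1 ^ (2 * k + 1)))
    -- v vanishes at every point of G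
    (hG : ∀ i ∈ Finset.Icc (-(k : ℤ)) (k : ℤ),
      MvPolynomial.eval ![1, g i] v = 0 ∧ MvPolynomial.eval ![-1, g i] v = 0 ∧
      MvPolynomial.eval ![g i, 1] v = 0 ∧ MvPolynomial.eval ![g i, -1] v = 0)
    -- v vanishes at every point of I
    (hIv : ∀ r ∈ I, MvPolynomial.eval ![r.1, r.2] v = 0) :
    v = 0 := by
  classical
  have hq : v = p + MvPolynomial.C a₀ * qpoly k := by rw [hv, qpoly]
  obtain ⟨c₁, c₂, B₁, hf₁, hf₂, hc₁, hc₂⟩ :=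
    edge k g hinj v p a₀ hp hq (fun i hi => ⟨(hG i hi).1, (hG i hi).2.1⟩)
  set σv := MvPolynomial.rename (Equiv.swap (0:Fin 2) 1) v with hσvdef
  set σp := MvPolynomial.rename (Equiv.swap (0:Fin 2) 1) p with hσpdef
  have hσp : σp.totalDegree ≤ 2 * k + 1 :=
    (MvPolynomial.totalDegree_rename_le _ _).trans hp
  have hσv : σv = σp + MvPolynomial.C (-a₀) * qpoly k := by
    rw [hσvdef, hσpdef, hv]
    simp only [map_add, map_mul, map_sub, map_pow, MvPolynomial.rename_C,
      MvPolynomial.rename_X, Equiv.swap_apply_left, Equiv.swap_apply_right, map_neg, qpoly]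
    ring
  have hevalσ : ∀ x y : ℝ, MvPolynomial.eval ![x, y] σv = MvPolynomial.eval ![y, x] v := by
    intro x y
    rw [hσvdef, MvPolynomial.eval_rename]
    have harr : (![x, y] ∘ ⇑(Equiv.swap (0:Fin 2) 1)) = ![y, x] := by
      funext j; fin_cases j <;> simp
    rw [harr]
  obtain ⟨c₃, c₄, B₂, hf₃, hf₄, hc₃, hc₄⟩ :=
    edge k g hinj σv σp (-a₀) hσp hσv
      (fun i hi => ⟨by rw [hevalσ]; exact (hG i hi).2.2.1,
        by rw [hevalσ]; exact (hG i hi).2.2.2⟩)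
  have hΦ1 : (Phi k g).eval 1 ≠ 0 := ne_of_gt (Phi_eval_one_pos k g hmem)
  have hΦn : (Phi k g).eval (-1) = -(Phi k g).eval 1 := Phi_eval_neg_one k g hsym
  have corner : ∀ (w : MvPolynomial (Fin 2) ℝ) (c s t : ℝ),
      (Tmap w).map (evalRingHom s) = Polynomial.C c * Phi k g →
      c * (Phi k g).eval t = MvPolynomial.eval ![s, t] w := by
    intro w c s t hf
    have h := eval_Tmap w s t
    rw [hf] at h
    simpa using h
  have E1 := corner v c₁ 1 1 hf₁
  have E2 := corner v c₁ 1 (-1) hf₁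
  have E3 := corner v c₂ (-1) 1 hf₂
  have E5 := corner σv c₃ 1 1 hf₃
  have E6 := corner σv c₃ 1 (-1) hf₃
  have E7 := corner σv c₄ (-1) 1 hf₄
  rw [hevalσ] at E5 E6 E7
  rw [← E1] at E5
  rw [← E3, hΦn] at E6
  rw [← E2, hΦn] at E7
  -- E5 : c₃ * Φ1 = c₁ * Φ1 ; E6 : c₃ * (-Φ1) = c₂ * Φ1 ; E7 : c₄ * Φ1 = c₁ * (-Φ1)
  have h13 : c₃ = c₁ := mul_right_cancel₀ hΦ1 E5
  have h26 : c₂ = -c₃ := by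
    have : c₂ * (Phi k g).eval 1 = (-c₃) * (Phi k g).eval 1 := by linarith [E6]
    exact mul_right_cancel₀ hΦ1 this
  have h47 : c₄ = -c₁ := by
    have : c₄ * (Phi k g).eval 1 = (-c₁) * (Phi k g).eval 1 := by linarith [E7]
    exact mul_right_cancel₀ hΦ1 this
  have hc10 : c₁ = 0 := by linarith [hc₁, hc₂, hc₃, hc₄]
  have hAz : a₀ * ((Tmap (qpoly k)).coeff (2 * k + 1)).eval 1 = 0 := by
    linarith [hc₁, hc₂, hc₃, hc₄]
  have hc20 : c₂ = 0 := by linarith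
  have hc30 : c₃ = 0 := by linarith
  have hc40 : c₄ = 0 := by linarith
  have hCq : MvPolynomial.C a₀ * qpoly k = 0 := by
    rcases Nat.eq_zero_or_pos k with hk | hk
    · rw [hk, qpoly_zero, mul_zero]
    · have he : ((Tmap (qpoly k)).coeff (2 * k + 1)).eval 1 = -1 := by
        rw [Tmap_qpoly_coeff k hk]; simp
      rw [he] at hAz
      have : a₀ = 0 := by linarith
      rw [this, map_zero, zero_mul]
  have hvp : v = p := by rw [hq, hCq, add_zero]
  have htdv : v.totalDegree ≤ 2 * k + 1 := hvp ▸ hp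
  have hf₁z : (Tmap v).map (evalRingHom 1) = 0 := by rw [hf₁, hc10, map_zero, zero_mul]
  have hf₂z : (Tmap v).map (evalRingHom (-1)) = 0 := by rw [hf₂, hc20, map_zero, zero_mul]
  have hf₃z : (Tmap σv).map (evalRingHom 1) = 0 := by rw [hf₃, hc30, map_zero, zero_mul]
  have hf₄z : (Tmap σv).map (evalRingHom (-1)) = 0 := by rw [hf₄, hc40, map_zero, zero_mul]
  have hy1 : ∀ s : ℝ, MvPolynomial.eval ![s, 1] v = 0 := by
    intro s
    rw [← hevalσ 1 s, ← eval_Tmap σv 1 s, hf₃z]; simp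
  have hym1 : ∀ s : ℝ, MvPolynomial.eval ![s, -1] v = 0 := by
    intro s
    rw [← hevalσ (-1) s, ← eval_Tmap σv (-1) s, hf₄z]; simp
  -- divide by (y - 1)(y + 1) in ℝ[x][y]
  have heval1 : (Tmap v).eval (1 : Polynomial ℝ) = 0 := by
    apply Polynomial.funext
    intro s
    have h := evalC_Tmap v s 1
    rw [Polynomial.C_1] at h
    rw [h, Polynomial.eval_zero]
    exact hy1 s
  have hevalm1 : (Tmap v).eval (-1 : Polynomial ℝ) = 0 := by
    apply Polynomial.funext
    intro s
    have h := evalC_Tmap v s (-1)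
    rw [map_neg, Polynomial.C_1] at h
    rw [h, Polynomial.eval_zero]
    exact hym1 s
  have hd1 : (Polynomial.X - 1 : Polynomial (Polynomial ℝ)) ∣ Tmap v := by
    have := (Polynomial.dvd_iff_isRoot (p := Tmap v) (a := (1 : Polynomial ℝ))).mpr heval1
    rwa [map_one] at this
  have hd2 : (Polynomial.X + 1 : Polynomial (Polynomial ℝ)) ∣ Tmap v := by
    have := (Polynomial.dvd_iff_isRoot (p := Tmap v) (a := (-1 : Polynomial ℝ))).mpr hevalm1
    rwa [map_neg, map_one, sub_neg_eq_add] at this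
  have hu2 : IsUnit ((1 : Polynomial ℝ) - (-1)) := by
    have h2 : ((1 : Polynomial ℝ) - (-1)) = Polynomial.C 2 := by
      rw [map_ofNat]; ring
    rw [h2]
    exact Polynomial.isUnit_C.mpr (by norm_num)
  have hcop : IsCoprime (Polynomial.X - 1 : Polynomial (Polynomial ℝ)) (Polynomial.X + 1) := by
    have := Polynomial.isCoprime_X_sub_C_of_isUnit_sub hu2
    rwa [map_one, map_neg, map_one, sub_neg_eq_add] at this
  obtain ⟨W, hW⟩ := hcop.mul_dvd hd1 hd2
  have hmulne : ((Polynomial.X - 1) * (Polynomial.X + 1) : Polynomial ℝ) ≠ 0 := by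
    have : ((Polynomial.X - 1 : Polynomial ℝ)).Monic := by
      have := Polynomial.monic_X_sub_C (1 : ℝ); rwa [map_one] at this
    have h2 : ((Polynomial.X + 1 : Polynomial ℝ)).Monic := by
      have := Polynomial.monic_X_sub_C (-1 : ℝ); rwa [map_neg, map_one, sub_neg_eq_add] at this
    exact (this.mul h2).ne_zero
  have hWmap : ∀ s : ℝ, (Tmap v).map (evalRingHom s) = 0 →
      W.map (evalRingHom s) = 0 := by
    intro s hz
    have h := congrArg (Polynomial.map (evalRingHom s)) hW
    rw [hz, Polynomial.map_mul, Polynomial.map_mul, Polynomial.map_sub,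
      Polynomial.map_add, Polynomial.map_X, Polynomial.map_one] at h
    have := h.symm
    rcases mul_eq_zero.mp this with h' | h'
    · exact absurd h' hmulne
    · exact h'
  have hW1 := hWmap 1 hf₁z
  have hWm1 := hWmap (-1) hf₂z
  have hcopx : IsCoprime (Polynomial.X - 1 : Polynomial ℝ) (Polynomial.X + 1) := by
    have hu : IsUnit ((1 : ℝ) - (-1)) := by norm_num
    have := Polynomial.isCoprime_X_sub_C_of_isUnit_sub hu
    rwa [map_one, map_neg, map_one, sub_neg_eq_add] at this
  have hdvdW : Polynomial.C ((Polynomial.X - 1) * (Polynomial.X + 1) : Polynomial ℝ) ∣ W := by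
    rw [Polynomial.C_dvd_iff_dvd_coeff]
    intro j
    have e1 : (W.coeff j).eval 1 = 0 := by
      have := congrArg (fun P => Polynomial.coeff P j) hW1
      simpa [Polynomial.coeff_map] using this
    have em1 : (W.coeff j).eval (-1) = 0 := by
      have := congrArg (fun P => Polynomial.coeff P j) hWm1
      simpa [Polynomial.coeff_map] using this
    refine hcopx.mul_dvd ?_ ?_
    · have := (Polynomial.dvd_iff_isRoot (p := W.coeff j) (a := (1:ℝ))).mpr e1
      rwa [map_one] at this
    · have := (Polynomial.dvd_iff_isRoot (p := W.coeff j) (a := (-1:ℝ))).mpr em1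
      rwa [map_neg, map_one, sub_neg_eq_add] at this
  obtain ⟨R, hR⟩ := hdvdW
  have hfac : v = (MvPolynomial.X 1 - MvPolynomial.C 1) *
      ((MvPolynomial.X 1 - MvPolynomial.C (-1)) *
        ((MvPolynomial.X 0 - MvPolynomial.C 1) *
          ((MvPolynomial.X 0 - MvPolynomial.C (-1)) * Umap R))) := by
    have h := congrArg Umap hW
    rw [Umap_Tmap, hR] at h
    rw [h]
    simp only [Umap, map_mul, map_sub, map_add, map_one, Polynomial.coe_eval₂RingHom,
      Polynomial.eval₂_X, Polynomial.eval₂_C, Polynomial.eval₂_mul, Polynomial.eval₂_sub,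
      Polynomial.eval₂_add, Polynomial.eval₂_one, map_neg]
    ring
  set r := Umap R with hrdef
  have hr0 : r = 0 := by
    rcases eq_or_ne r 0 with h | hne
    · exact h
    · have htd : v.totalDegree = r.totalDegree + 4 := by
        rw [hfac]
        rw [tdfac 1 1 _ (by
          exact mul_ne_zero (X_sub_C_ne_zero' 1 (-1)) (mul_ne_zero (X_sub_C_ne_zero' 0 1)
            (mul_ne_zero (X_sub_C_ne_zero' 0 (-1)) hne)))]
        rw [tdfac 1 (-1) _ (mul_ne_zero (X_sub_C_ne_zero' 0 1)
            (mul_ne_zero (X_sub_C_ne_zero' 0 (-1)) hne))]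
        rw [tdfac 0 1 _ (mul_ne_zero (X_sub_C_ne_zero' 0 (-1)) hne)]
        rw [tdfac 0 (-1) _ hne]
      have htdr : ∀ d ∈ r.support, ((d 0 + d 1 : ℕ) : ℤ) ≤ 2 * (k : ℤ) - 3 := by
        intro d hd
        have h1 := mem_support_le r hd
        have h2 : r.totalDegree + 4 ≤ 2 * k + 1 := htd ▸ htdv
        push_cast
        omega
      have hIr : ∀ pt ∈ I, MvPolynomial.eval ![pt.1, pt.2] r = 0 := by
        intro pt hpt
        have h0 := hIv pt hpt
        obtain ⟨hs, ht⟩ := hI pt hpt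
        rw [hfac] at h0
        simp only [map_mul, map_sub, MvPolynomial.eval_X, MvPolynomial.eval_C,
          Matrix.cons_val_one, Matrix.cons_val_zero, Matrix.head_cons] at h0
        have hne1 : pt.2 - 1 ≠ 0 := sub_ne_zero.mpr (ne_of_lt ht.2)
        have hne2 : pt.2 - (-1) ≠ 0 := sub_ne_zero.mpr (ne_of_gt ht.1)
        have hne3 : pt.1 - 1 ≠ 0 := sub_ne_zero.mpr (ne_of_lt hs.2)
        have hne4 : pt.1 - (-1) ≠ 0 := sub_ne_zero.mpr (ne_of_gt hs.1)
        rcases mul_eq_zero.mp h0 with h' | h'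
        · exact absurd h' hne1
        rcases mul_eq_zero.mp h' with h' | h'
        · exact absurd h' hne2
        rcases mul_eq_zero.mp h' with h' | h'
        · exact absurd h' hne3
        rcases mul_eq_zero.mp h' with h' | h'
        · exact absurd h' hne4
        exact h'
      exact hunisolv r htdr hIr
  rw [hfac, hr0, mul_zero, mul_zero, mul_zero, mul_zero]
end

section
/- Let k ≥ 0, m = 2k+1, and let I be a finite subset of the open square (−1,1)² such that the only polynomial of total degree ≤ 2k−3 vanishing at every point of I is the zero polynomial. Suppose v ∈ ER_m(K̂) satisfies ∫_{−1}^{1} v(1,t) t^j dt = ∫_{−1}^{1} v(−1,t) t^j dt = ∫_{−1}^{1} v(t,1) t^j dt = ∫_{−1}^{1} v(t,−1) t^j dt = 0 for every j = 0, 1, …, 2k (i.e. all moments of order ≤ 2k of v on each of the four edges of K̂ vanish), and that v vanishes at every point of I. Then v is the zero polynomial. -/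
open Polynomial MeasureTheory Set Function

namespace Stmt6


/-- moment-vanishing property on [-1,1] up to order 2k -/
def Orth (k : ℕ) (f : ℝ[X]) : Prop :=
  ∀ j ≤ 2 * k, (∫ t in (-1:ℝ)..1, f.eval t * t ^ j) = 0

lemma integrable_mul_pow (f : ℝ[X]) (j : ℕ) :
    IntervalIntegrable (fun t => f.eval t * t ^ j) volume (-1:ℝ) 1 :=
  ((f.continuous).mul (continuous_pow j)).intervalIntegrable _ _

lemma integrable_eval_mul (f g : ℝ[X]) :
    IntervalIntegrable (fun t => f.eval t * g.eval t) volume (-1:ℝ) 1 :=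
  ((f.continuous).mul (g.continuous)).intervalIntegrable _ _

lemma orth_poly_mul {k : ℕ} {f : ℝ[X]} (hf : Orth k f) (g : ℝ[X]) (hg : g.natDegree ≤ 2 * k) :
    (∫ t in (-1:ℝ)..1, f.eval t * g.eval t) = 0 := by
  have hlt : g.natDegree < 2 * k + 1 := Nat.lt_succ_of_le hg
  have hfun : ∀ t : ℝ, f.eval t * g.eval t
      = ∑ j ∈ Finset.range (2*k+1), g.coeff j * (f.eval t * t ^ j) := by
    intro t
    rw [Polynomial.eval_eq_sum_range' hlt, Finset.mul_sum]
    refine Finset.sum_congr rfl fun j _ => by ring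
  rw [intervalIntegral.integral_congr (g := fun t => ∑ j ∈ Finset.range (2*k+1),
      g.coeff j * (f.eval t * t ^ j)) (fun t _ => hfun t)]
  rw [intervalIntegral.integral_finset_sum]
  · refine Finset.sum_eq_zero fun j hj => ?_
    rw [intervalIntegral.integral_const_mul, hf j (Nat.lt_succ_iff.mp (Finset.mem_range.mp hj)),
      mul_zero]
  · exact fun j _ => (integrable_mul_pow f j).const_mul _

lemma pos_core (g : ℝ[X]) (hg : g ≠ 0) (w : ℝ[X])
    (hw : ∀ t ∈ Set.Ioo (-1:ℝ) 1, 0 < w.eval t) :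
    0 < ∫ t in (-1:ℝ)..1, w.eval t * (g.eval t) ^ 2 := by
  set f : ℝ → ℝ := fun t => w.eval t * (g.eval t) ^ 2 with hfdef
  have hfi : IntervalIntegrable f volume (-1:ℝ) 1 :=
    ((w.continuous).mul ((g.continuous).pow 2)).intervalIntegrable _ _
  have h₀ : 0 ≤ᵐ[volume.restrict (Set.uIoc (-1:ℝ) 1)] f := by
    rw [Set.uIoc_of_le (by norm_num : (-1:ℝ) ≤ 1)]
    refine ae_restrict_of_ae_eq_of_ae_restrict Ioo_ae_eq_Ioc ?_
    rw [ae_restrict_iff' measurableSet_Ioo]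
    filter_upwards with x hx
    exact mul_nonneg (hw x hx).le (sq_nonneg _)
  rw [intervalIntegral.integral_pos_iff_support_of_nonneg_ae' h₀ hfi]
  refine ⟨by norm_num, ?_⟩
  have hsub : Set.Ioo (-1:ℝ) 1 \ (g.roots.toFinset : Set ℝ) ⊆ support f ∩ Set.Ioc (-1:ℝ) 1 := by
    rintro x ⟨hx, hxr⟩
    refine ⟨?_, Set.Ioo_subset_Ioc_self hx⟩
    have hgx : g.eval x ≠ 0 := by
      intro h0
      exact hxr (Multiset.mem_toFinset.mpr ((Polynomial.mem_roots hg).mpr h0))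
    exact (mul_pos (hw x hx)
      ((sq_nonneg _).lt_of_ne (Ne.symm (pow_ne_zero 2 hgx)))).ne'
  have hnull : volume ((g.roots.toFinset : Set ℝ)) = 0 :=
    (Set.Finite.measure_zero (Finset.finite_toSet _) _)
  have : volume (Set.Ioo (-1:ℝ) 1 \ (g.roots.toFinset : Set ℝ)) = volume (Set.Ioo (-1:ℝ) 1) :=
    measure_diff_null hnull
  calc (0:ENNReal) < volume (Set.Ioo (-1:ℝ) 1) := by
        rw [Real.volume_Ioo]; norm_num
    _ = volume (Set.Ioo (-1:ℝ) 1 \ (g.roots.toFinset : Set ℝ)) := this.symm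
    _ ≤ volume (support f ∩ Set.Ioc (-1:ℝ) 1) := measure_mono hsub



lemma defn_zero {k : ℕ} {g : ℝ[X]} (hdeg : g.natDegree ≤ 2 * k) (h : Orth k g) : g = 0 := by
  by_contra hg
  have h1 : (∫ t in (-1:ℝ)..1, g.eval t * g.eval t) = 0 := orth_poly_mul h g hdeg
  have h2 : 0 < ∫ t in (-1:ℝ)..1, (1:ℝ[X]).eval t * (g.eval t) ^ 2 :=
    pos_core g hg 1 (by intro t _; simp)
  rw [intervalIntegral.integral_congr
    (g := fun t => g.eval t * g.eval t) (fun t _ => by simp [sq])] at h2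
  exact absurd h1 (ne_of_gt h2)

lemma defn_zero' {k : ℕ} {g : ℝ[X]} (hdeg : g.natDegree ≤ 2 * k)
    (h : Orth k ((X ^ 2 - 1) * g)) : g = 0 := by
  by_contra hg
  have h1 : (∫ t in (-1:ℝ)..1, ((X ^ 2 - 1 : ℝ[X]) * g).eval t * g.eval t) = 0 :=
    orth_poly_mul h g hdeg
  have h2 : 0 < ∫ t in (-1:ℝ)..1, (1 - X ^ 2 : ℝ[X]).eval t * (g.eval t) ^ 2 :=
    pos_core g hg _ (by
      intro t ht
      simp only [eval_sub, eval_one, eval_pow, eval_X]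
      obtain ⟨ha, hb⟩ := ht
      nlinarith)
  rw [intervalIntegral.integral_congr
    (g := fun t => -(((X ^ 2 - 1 : ℝ[X]) * g).eval t * g.eval t))
    (fun t _ => by simp; ring)] at h2
  rw [intervalIntegral.integral_neg, h1, neg_zero] at h2
  exact absurd h2 (lt_irrefl 0)

-- Orth is closed under linear combinations
lemma Orth.sub {k : ℕ} {f g : ℝ[X]} (hf : Orth k f) (hg : Orth k g) : Orth k (f - g) := by
  intro j hj
  have : ∀ t : ℝ, (f - g).eval t * t ^ j = f.eval t * t ^ j - g.eval t * t ^ j := by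
    intro t; simp [sub_mul]
  rw [intervalIntegral.integral_congr (g := fun t => f.eval t * t ^ j - g.eval t * t ^ j)
    (fun t _ => this t),
    intervalIntegral.integral_sub (integrable_mul_pow f j) (integrable_mul_pow g j),
    hf j hj, hg j hj, sub_zero]

lemma Orth.Cmul {k : ℕ} {f : ℝ[X]} (hf : Orth k f) (c : ℝ) : Orth k (C c * f) := by
  intro j hj
  have : ∀ t : ℝ, (C c * f).eval t * t ^ j = c * (f.eval t * t ^ j) := by
    intro t; simp; ring
  rw [intervalIntegral.integral_congr (g := fun t => c * (f.eval t * t ^ j)) (fun t _ => this t),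
    intervalIntegral.integral_const_mul, hf j hj, mul_zero]



noncomputable def momMapL (k : ℕ) : ℝ[X] →ₗ[ℝ] (Fin (2 * k + 1) → ℝ) where
  toFun f := fun j => ∫ t in (-1:ℝ)..1, f.eval t * t ^ (j : ℕ)
  map_add' f g := by
    funext j
    have : ∀ t : ℝ, (f + g).eval t * t ^ (j:ℕ) = f.eval t * t ^ (j:ℕ) + g.eval t * t ^ (j:ℕ) := by
      intro t; simp [add_mul]
    simp only [Pi.add_apply]
    rw [intervalIntegral.integral_congr
      (g := fun t => f.eval t * t ^ (j:ℕ) + g.eval t * t ^ (j:ℕ)) (fun t _ => this t),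
      intervalIntegral.integral_add (integrable_mul_pow f _) (integrable_mul_pow g _)]
  map_smul' c f := by
    funext j
    have : ∀ t : ℝ, (c • f).eval t * t ^ (j:ℕ) = c * (f.eval t * t ^ (j:ℕ)) := by
      intro t; simp; ring
    simp only [RingHom.id_apply, Pi.smul_apply, smul_eq_mul]
    rw [intervalIntegral.integral_congr
      (g := fun t => c * (f.eval t * t ^ (j:ℕ))) (fun t _ => this t),
      intervalIntegral.integral_const_mul]

lemma natdeg_of_mem_degreeLT {k : ℕ} {f : ℝ[X]} (h : f ∈ degreeLT ℝ (2 * k + 3)) :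
    f.natDegree ≤ 2 * k + 2 := by
  by_cases hf : f = 0
  · simp [hf]
  · have := Polynomial.mem_degreeLT.mp h
    have := (Polynomial.natDegree_lt_iff_degree_lt hf).mpr this
    omega

lemma exists_LM (k : ℕ) : ∃ L M : ℝ[X],
    Orth k L ∧ Orth k M ∧ L.natDegree ≤ 2*k+2 ∧ M.natDegree ≤ 2*k+2 ∧
    L.coeff (2*k+1) = 1 ∧ L.coeff (2*k+2) = 0 ∧ M.coeff (2*k+1) = 0 ∧ M.coeff (2*k+2) = 1 := by
  classical
  set V : Submodule ℝ ℝ[X] := degreeLT ℝ (2 * k + 3) with hV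
  haveI : FiniteDimensional ℝ ↥V := (degreeLTEquiv ℝ (2 * k + 3)).symm.finiteDimensional
  have hVrank : Module.finrank ℝ ↥V = 2 * k + 3 := by
    rw [(degreeLTEquiv ℝ (2 * k + 3)).finrank_eq, Module.finrank_fin_fun]
  set Φ : ↥V →ₗ[ℝ] (Fin (2 * k + 1) → ℝ) := (momMapL k).comp V.subtype with hΦ
  set W : Submodule ℝ ↥V := LinearMap.ker Φ with hW
  have hWrank : 2 ≤ Module.finrank ℝ ↥W := by
    rw [hW]
    have h1 := LinearMap.finrank_range_add_finrank_ker Φ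
    have h2 : Module.finrank ℝ ↥(LinearMap.range Φ) ≤ 2 * k + 1 := by
      have := Submodule.finrank_le (LinearMap.range Φ)
      rwa [Module.finrank_fin_fun] at this
    rw [hVrank] at h1
    omega
  -- elements of W give Orth polynomials of degree ≤ 2k+2
  have hOrthW : ∀ f : ↥W, Orth k (((f : ↥V) : ℝ[X])) := by
    rintro ⟨⟨f, hfV⟩, hfW⟩
    intro j hj
    have := congrFun (LinearMap.mem_ker.mp hfW) ⟨j, by omega⟩
    exact this
  have hdegW : ∀ f : ↥W, (((f : ↥V) : ℝ[X])).natDegree ≤ 2 * k + 2 := fun f =>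
    natdeg_of_mem_degreeLT (f : ↥V).2
  set ι : ↥W →ₗ[ℝ] ℝ[X] := V.subtype.comp W.subtype with hι
  set Ψ : ↥W →ₗ[ℝ] ℝ × ℝ :=
    LinearMap.prod ((lcoeff ℝ (2*k+1)).comp ι) ((lcoeff ℝ (2*k+2)).comp ι) with hΨ
  have hker : LinearMap.ker Ψ = ⊥ := by
    rw [Submodule.eq_bot_iff]
    intro f hf
    have hc : (((f : ↥V) : ℝ[X])).coeff (2*k+1) = 0 ∧ (((f : ↥V) : ℝ[X])).coeff (2*k+2) = 0 := by
      have := LinearMap.mem_ker.mp hf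
      exact ⟨congrArg Prod.fst this, congrArg Prod.snd this⟩
    have hdeg : (((f : ↥V) : ℝ[X])).natDegree ≤ 2 * k := by
      rw [Polynomial.natDegree_le_iff_coeff_eq_zero]
      intro m hm
      rcases Nat.lt_or_ge m (2*k+3) with h | h
      · rcases (by omega : m = 2*k+1 ∨ m = 2*k+2) with rfl | rfl
        · exact hc.1
        · exact hc.2
      · exact Polynomial.coeff_eq_zero_of_natDegree_lt (by have := hdegW f; omega)
    have := defn_zero hdeg (hOrthW f)
    ext1
    ext1
    exact this
  have hinj : Function.Injective Ψ := (LinearMap.ker_eq_bot (M := ↥W)).mp hker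
  have hrank2 : Module.finrank ℝ ↥W = Module.finrank ℝ (ℝ × ℝ) := by
    have hle := LinearMap.finrank_le_finrank_of_injective hinj
    have : Module.finrank ℝ (ℝ × ℝ) = 2 := by simp
    omega
  have hsurj : Function.Surjective Ψ :=
    (LinearMap.injective_iff_surjective_of_finrank_eq_finrank (V := ↥W) hrank2).mp hinj
  obtain ⟨L₀, hL₀⟩ := hsurj (1, 0)
  obtain ⟨M₀, hM₀⟩ := hsurj (0, 1)
  refine ⟨((L₀ : ↥V) : ℝ[X]), ((M₀ : ↥V) : ℝ[X]), hOrthW L₀, hOrthW M₀, hdegW L₀, hdegW M₀,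
    congrArg Prod.fst hL₀, congrArg Prod.snd hL₀, congrArg Prod.fst hM₀, congrArg Prod.snd hM₀⟩



lemma coeff_comp_neg (f : ℝ[X]) (n : ℕ) : (f.comp (-X)).coeff n = (-1)^n * f.coeff n := by
  induction f using Polynomial.induction_on' with
  | add p q hp hq => simp [add_comp, hp, hq, mul_add]
  | monomial m c =>
      have hx : (-X : ℝ[X]) = C (-1) * X := by
        rw [map_neg, C_1, neg_mul, one_mul]
      rw [monomial_comp, hx, mul_pow, ← map_pow]
      by_cases h : n = m
      · subst h
        rw [← mul_assoc, ← C_mul, coeff_C_mul, coeff_X_pow, if_pos rfl, coeff_monomial,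
          if_pos rfl]
        ring
      · rw [← mul_assoc, ← C_mul, coeff_C_mul, coeff_X_pow, if_neg h, coeff_monomial,
          if_neg (Ne.symm h)]
        ring

lemma orth_comp_neg {k : ℕ} {f : ℝ[X]} (hf : Orth k f) : Orth k (f.comp (-X)) := by
  intro j hj
  have hsq : ((-1:ℝ))^j * (-1)^j = 1 := by
    rw [← pow_add]
    exact Even.neg_one_pow ⟨j, by omega⟩
  have h1 : ∀ t : ℝ, (f.comp (-X)).eval t * t ^ j
      = (-1)^j * (f.eval (-t) * (-t) ^ j) := by
    intro t
    simp only [eval_comp, eval_neg, eval_X]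
    rw [show ((-1:ℝ))^j * (f.eval (-t) * (-t) ^ j)
        = ((-1:ℝ)^j * (-1)^j) * (f.eval (-t) * t ^ j) by rw [neg_pow]; ring, hsq, one_mul]
  have h2 := intervalIntegral.integral_comp_neg (a := (-1:ℝ)) (b := 1)
    (f := fun s => Polynomial.eval s f * s ^ j)
  simp only [neg_neg] at h2
  rw [intervalIntegral.integral_congr
    (g := fun t => (-1)^j * (f.eval (-t) * (-t) ^ j)) (fun t _ => h1 t),
    intervalIntegral.integral_const_mul, h2, hf j hj, mul_zero]



lemma master (k : ℕ) : ∃ L M : ℝ[X],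
    L.eval (-1) = - L.eval 1 ∧ M.eval (-1) = M.eval 1 ∧ L.eval 1 ≠ 0 ∧ M.eval 1 ≠ 0 ∧
    ∀ f : ℝ[X], Orth k f → f.natDegree ≤ 2*k+2 →
      f = C (f.coeff (2*k+1)) * L + C (f.coeff (2*k+2)) * M := by
  obtain ⟨L, M, hL, hM, hLd, hMd, hL1, hL2, hM1, hM2⟩ := exists_LM k
  have hdecomp : ∀ f : ℝ[X], Orth k f → f.natDegree ≤ 2*k+2 →
      f = C (f.coeff (2*k+1)) * L + C (f.coeff (2*k+2)) * M := by
    intro f hO hd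
    set a := f.coeff (2*k+1) with ha
    set b := f.coeff (2*k+2) with hb
    have hOh : Orth k (f - C a * L - C b * M) := (hO.sub (hL.Cmul a)).sub (hM.Cmul b)
    have hdh : (f - C a * L - C b * M).natDegree ≤ 2 * k := by
      rw [Polynomial.natDegree_le_iff_coeff_eq_zero]
      intro m hm
      simp only [coeff_sub, coeff_C_mul]
      rcases (by omega : m = 2*k+1 ∨ m = 2*k+2 ∨ 2*k+2 < m) with rfl | rfl | hgt
      · rw [← ha, hL1, hM1]; ring
      · rw [← hb, hL2, hM2]; ring
      · rw [Polynomial.coeff_eq_zero_of_natDegree_lt (by omega),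
          Polynomial.coeff_eq_zero_of_natDegree_lt (lt_of_le_of_lt hLd hgt),
          Polynomial.coeff_eq_zero_of_natDegree_lt (lt_of_le_of_lt hMd hgt)]
        ring
    have h0 := defn_zero hdh hOh
    linear_combination h0
  have hcompdeg : ∀ f : ℝ[X], f.natDegree ≤ 2*k+2 → (f.comp (-X)).natDegree ≤ 2*k+2 := by
    intro f hf
    refine le_trans natDegree_comp_le ?_
    have : (-X : ℝ[X]).natDegree = 1 := by rw [natDegree_neg, natDegree_X]
    rw [this, mul_one]; exact hf
  -- parity of L
  have hLparity : L.eval (-1) = - L.eval 1 := by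
    have hneg : (-(L.comp (-X)) : ℝ[X]) = C (-1) * (L.comp (-X)) := by
      rw [map_neg, C_1, neg_mul, one_mul]
    have hO : Orth k (-(L.comp (-X))) := hneg ▸ ((orth_comp_neg hL).Cmul (-1))
    have hd : (-(L.comp (-X))).natDegree ≤ 2*k+2 := by
      rw [natDegree_neg]; exact hcompdeg L hLd
    have hc1 : (-(L.comp (-X))).coeff (2*k+1) = 1 := by
      rw [coeff_neg, coeff_comp_neg, hL1, pow_succ, pow_mul]; norm_num
    have hc2 : (-(L.comp (-X))).coeff (2*k+2) = 0 := by
      rw [coeff_neg, coeff_comp_neg, hL2]; ring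
    have := hdecomp _ hO hd
    rw [hc1, hc2] at this
    simp only [C_1, one_mul, map_zero, zero_mul, add_zero] at this
    have heval := congrArg (Polynomial.eval (-1 : ℝ)) this
    simp only [eval_neg, eval_comp, eval_X, neg_neg] at heval
    linarith
  have hMparity : M.eval (-1) = M.eval 1 := by
    have hO : Orth k (M.comp (-X)) := orth_comp_neg hM
    have hd : (M.comp (-X)).natDegree ≤ 2*k+2 := hcompdeg M hMd
    have hc1 : (M.comp (-X)).coeff (2*k+1) = 0 := by
      rw [coeff_comp_neg, hM1]; ring
    have hc2 : (M.comp (-X)).coeff (2*k+2) = 1 := by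
      rw [coeff_comp_neg, hM2, pow_succ, pow_succ, pow_mul]; norm_num
    have := hdecomp _ hO hd
    rw [hc1, hc2] at this
    simp only [C_1, one_mul, map_zero, zero_mul, zero_add] at this
    have heval := congrArg (Polynomial.eval (-1 : ℝ)) this
    simp only [eval_comp, eval_X, eval_neg, neg_neg] at heval
    linarith
  -- nonvanishing at 1
  have hfactor : ∀ f : ℝ[X], Orth k f → f.natDegree ≤ 2*k+2 → f.eval 1 = 0 → f.eval (-1) = 0 →
      f = 0 := by
    intro f hO hd h1 h2
    have hdvd1 : (X - C (1:ℝ)) ∣ f := Polynomial.dvd_iff_isRoot.mpr h1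
    have hdvd2 : (X - C (-1:ℝ)) ∣ f := Polynomial.dvd_iff_isRoot.mpr h2
    have hcop : IsCoprime (X - C (1:ℝ)) (X - C (-1:ℝ)) :=
      Polynomial.isCoprime_X_sub_C_of_isUnit_sub
        (by norm_num : IsUnit ((1:ℝ) - (-1)))
    have hdvd : (X - C (1:ℝ)) * (X - C (-1:ℝ)) ∣ f := hcop.mul_dvd hdvd1 hdvd2
    have hprod : (X - C (1:ℝ)) * (X - C (-1:ℝ)) = X^2 - 1 := by
      simp only [map_neg, C_1]; ring
    rw [hprod] at hdvd
    obtain ⟨g, hg⟩ := hdvd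
    by_cases hg0 : g = 0
    · rw [hg, hg0, mul_zero]
    · exfalso
      have hne : (X^2 - 1 : ℝ[X]) ≠ 0 := by
        have : (X^2 - 1 : ℝ[X]) = X^2 - C 1 := by rw [C_1]
        rw [this]
        exact (Polynomial.monic_X_pow_sub_C (1:ℝ) (by norm_num)).ne_zero
      have hdeg : f.natDegree = 2 + g.natDegree := by
        rw [hg, Polynomial.natDegree_mul hne hg0]
        congr 1
        have : (X^2 - 1 : ℝ[X]) = X^2 - C 1 := by rw [C_1]
        rw [this, Polynomial.natDegree_X_pow_sub_C]
      have hgd : g.natDegree ≤ 2*k := by omega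
      exact hg0 (defn_zero' hgd (hg ▸ hO))
  have hLne : L.eval 1 ≠ 0 := by
    intro h1
    have h2 : L.eval (-1) = 0 := by rw [hLparity, h1, neg_zero]
    have := hfactor L hL hLd h1 h2
    rw [this] at hL1
    simp at hL1
  have hMne : M.eval 1 ≠ 0 := by
    intro h1
    have h2 : M.eval (-1) = 0 := by rw [hMparity, h1]
    have := hfactor M hM hMd h1 h2
    rw [this] at hM2
    simp at hM2
  exact ⟨L, M, hLparity, hMparity, hLne, hMne, hdecomp⟩




noncomputable def Fx (c : ℝ) : MvPolynomial (Fin 2) ℝ →ₐ[ℝ] ℝ[X] :=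
  MvPolynomial.aeval ![Polynomial.C c, Polynomial.X]

noncomputable def Gy (c : ℝ) : MvPolynomial (Fin 2) ℝ →ₐ[ℝ] ℝ[X] :=
  MvPolynomial.aeval ![Polynomial.X, Polynomial.C c]

lemma eval_Fx (c t : ℝ) (q : MvPolynomial (Fin 2) ℝ) :
    (Fx c q).eval t = MvPolynomial.eval ![c, t] q := by
  induction q using MvPolynomial.induction_on with
  | C a => simp [Fx]
  | add p q hp hq => simp [map_add, hp, hq]
  | mul_X p i hp =>
      rw [map_mul, eval_mul, hp, map_mul]
      congr 1
      fin_cases i <;> simp [Fx]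

lemma eval_Gy (c t : ℝ) (q : MvPolynomial (Fin 2) ℝ) :
    (Gy c q).eval t = MvPolynomial.eval ![t, c] q := by
  induction q using MvPolynomial.induction_on with
  | C a => simp [Gy]
  | add p q hp hq => simp [map_add, hp, hq]
  | mul_X p i hp =>
      rw [map_mul, eval_mul, hp, map_mul]
      congr 1
      fin_cases i <;> simp [Gy]

lemma Fx_eq_sum (c : ℝ) (q : MvPolynomial (Fin 2) ℝ) :
    Fx c q = ∑ d ∈ q.support, C (q.coeff d * c ^ (d 0)) * X ^ (d 1) := by
  rw [Fx, MvPolynomial.aeval_def, MvPolynomial.eval₂_eq']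
  refine Finset.sum_congr rfl fun d _ => ?_
  rw [Fin.prod_univ_two]
  simp only [Matrix.cons_val_zero, Matrix.cons_val_one, Matrix.head_cons,
    Polynomial.algebraMap_eq]
  rw [← Polynomial.C_pow, C_mul, mul_assoc]

lemma Gy_eq_sum (c : ℝ) (q : MvPolynomial (Fin 2) ℝ) :
    Gy c q = ∑ d ∈ q.support, C (q.coeff d * c ^ (d 1)) * X ^ (d 0) := by
  rw [Gy, MvPolynomial.aeval_def, MvPolynomial.eval₂_eq']
  refine Finset.sum_congr rfl fun d _ => ?_
  rw [Fin.prod_univ_two]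
  simp only [Matrix.cons_val_zero, Matrix.cons_val_one, Matrix.head_cons,
    Polynomial.algebraMap_eq]
  rw [← Polynomial.C_pow, C_mul]
  ring

-- weight of an exponent vector
lemma weight_le_totalDegree {q : MvPolynomial (Fin 2) ℝ} {d : Fin 2 →₀ ℕ}
    (hd : d ∈ q.support) : d 0 + d 1 ≤ q.totalDegree := by
  have h := MvPolynomial.le_totalDegree hd
  have hsum : (d.sum fun _ e => e) = d 0 + d 1 := by
    rw [Finsupp.sum_fintype _ _ (fun _ => rfl), Fin.sum_univ_two]
  omega

lemma natDegree_Fx_le (c : ℝ) (q : MvPolynomial (Fin 2) ℝ) (n : ℕ)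
    (h : q.totalDegree ≤ n) : (Fx c q).natDegree ≤ n := by
  rw [Fx_eq_sum]
  refine Polynomial.natDegree_sum_le_of_forall_le _ _ fun d hd => ?_
  refine le_trans (Polynomial.natDegree_C_mul_le _ _) ?_
  rw [Polynomial.natDegree_X_pow]
  have := weight_le_totalDegree hd
  omega

lemma natDegree_Gy_le (c : ℝ) (q : MvPolynomial (Fin 2) ℝ) (n : ℕ)
    (h : q.totalDegree ≤ n) : (Gy c q).natDegree ≤ n := by
  rw [Gy_eq_sum]
  refine Polynomial.natDegree_sum_le_of_forall_le _ _ fun d hd => ?_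
  refine le_trans (Polynomial.natDegree_C_mul_le _ _) ?_
  rw [Polynomial.natDegree_X_pow]
  have := weight_le_totalDegree hd
  omega

lemma coeff_Fx (c : ℝ) (q : MvPolynomial (Fin 2) ℝ) (n : ℕ) (h : q.totalDegree ≤ n) (hn : 0 < n) :
    (Fx c q).coeff n = q.coeff (Finsupp.single 1 n) := by
  rw [Fx_eq_sum, Polynomial.finset_sum_coeff]
  have hstep : ∀ d ∈ q.support, (C (q.coeff d * c ^ (d 0)) * X ^ (d 1)).coeff n
      = if d = Finsupp.single 1 n then q.coeff (Finsupp.single 1 n) else 0 := by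
    intro d hd
    rw [Polynomial.coeff_C_mul, Polynomial.coeff_X_pow]
    by_cases hdn : d 1 = n
    · have h0 : d 0 = 0 := by
        have := weight_le_totalDegree hd
        omega
      have hdsingle : d = Finsupp.single 1 n := by
        ext i
        fin_cases i
        · simp [h0]
        · simp [hdn]
      rw [if_pos hdn.symm, if_pos hdsingle, hdsingle]
      simp [Finsupp.single_apply]
    · rw [if_neg (fun hh => hdn hh.symm), mul_zero, if_neg ?_]
      intro hh
      rw [hh] at hdn
      simp at hdn
  rw [Finset.sum_congr rfl hstep,
    Finset.sum_ite_eq' q.support (Finsupp.single 1 n) (fun _ => q.coeff (Finsupp.single 1 n))]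
  split
  · rfl
  · next hmem => exact (MvPolynomial.notMem_support_iff.mp hmem).symm

lemma coeff_Gy (c : ℝ) (q : MvPolynomial (Fin 2) ℝ) (n : ℕ) (h : q.totalDegree ≤ n) (hn : 0 < n) :
    (Gy c q).coeff n = q.coeff (Finsupp.single 0 n) := by
  rw [Gy_eq_sum, Polynomial.finset_sum_coeff]
  have hstep : ∀ d ∈ q.support, (C (q.coeff d * c ^ (d 1)) * X ^ (d 0)).coeff n
      = if d = Finsupp.single 0 n then q.coeff (Finsupp.single 0 n) else 0 := by
    intro d hd
    rw [Polynomial.coeff_C_mul, Polynomial.coeff_X_pow]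
    by_cases hdn : d 0 = n
    · have h0 : d 1 = 0 := by
        have := weight_le_totalDegree hd
        omega
      have hdsingle : d = Finsupp.single 0 n := by
        ext i
        fin_cases i
        · simp [hdn]
        · simp [h0]
      rw [if_pos hdn.symm, if_pos hdsingle, hdsingle]
      simp [Finsupp.single_apply]
    · rw [if_neg (fun hh => hdn hh.symm), mul_zero, if_neg ?_]
      intro hh
      rw [hh] at hdn
      simp at hdn
  rw [Finset.sum_congr rfl hstep,
    Finset.sum_ite_eq' q.support (Finsupp.single 0 n) (fun _ => q.coeff (Finsupp.single 0 n))]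
  split
  · rfl
  · next hmem => exact (MvPolynomial.notMem_support_iff.mp hmem).symm




/-- substitute `a` for the first variable, staying inside `MvPolynomial (Fin 2) ℝ` -/
noncomputable def ρx (a : ℝ) : MvPolynomial (Fin 2) ℝ →ₐ[ℝ] MvPolynomial (Fin 2) ℝ :=
  MvPolynomial.aeval ![MvPolynomial.C a, MvPolynomial.X 1]
noncomputable def ρy (a : ℝ) : MvPolynomial (Fin 2) ℝ →ₐ[ℝ] MvPolynomial (Fin 2) ℝ :=
  MvPolynomial.aeval ![MvPolynomial.X 0, MvPolynomial.C a]

lemma sub_rho_x_dvd (a : ℝ) (w : MvPolynomial (Fin 2) ℝ) :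
    (MvPolynomial.X 0 - MvPolynomial.C a) ∣ (w - ρx a w) := by
  induction w using MvPolynomial.induction_on with
  | C r => simp [ρx]
  | add u v hu hv =>
      have : u + v - ρx a (u + v) = (u - ρx a u) + (v - ρx a v) := by
        rw [map_add]; ring
      rw [this]; exact dvd_add hu hv
  | mul_X u i hu =>
      fin_cases i
      · show (MvPolynomial.X 0 - MvPolynomial.C a) ∣
            (u * MvPolynomial.X 0 - ρx a (u * MvPolynomial.X 0))
        have : u * MvPolynomial.X 0 - ρx a (u * MvPolynomial.X 0)
            = (u - ρx a u) * MvPolynomial.X 0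
              + (ρx a u) * (MvPolynomial.X 0 - MvPolynomial.C a) := by
          rw [map_mul]
          have hX : ρx a (MvPolynomial.X 0) = MvPolynomial.C a := by simp [ρx]
          rw [hX]; ring
        rw [this]
        exact dvd_add (hu.mul_right _) (dvd_mul_left _ _)
      · show (MvPolynomial.X 0 - MvPolynomial.C a) ∣
            (u * MvPolynomial.X 1 - ρx a (u * MvPolynomial.X 1))
        have : u * MvPolynomial.X 1 - ρx a (u * MvPolynomial.X 1)
            = (u - ρx a u) * MvPolynomial.X 1 := by
          rw [map_mul]
          have hX : ρx a (MvPolynomial.X 1) = MvPolynomial.X 1 := by simp [ρx]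
          rw [hX]; ring
        rw [this]
        exact hu.mul_right _
  
lemma sub_rho_y_dvd (a : ℝ) (w : MvPolynomial (Fin 2) ℝ) :
    (MvPolynomial.X 1 - MvPolynomial.C a) ∣ (w - ρy a w) := by
  induction w using MvPolynomial.induction_on with
  | C r => simp [ρy]
  | add u v hu hv =>
      have : u + v - ρy a (u + v) = (u - ρy a u) + (v - ρy a v) := by
        rw [map_add]; ring
      rw [this]; exact dvd_add hu hv
  | mul_X u i hu =>
      fin_cases i
      · show (MvPolynomial.X 1 - MvPolynomial.C a) ∣
            (u * MvPolynomial.X 0 - ρy a (u * MvPolynomial.X 0))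
        have : u * MvPolynomial.X 0 - ρy a (u * MvPolynomial.X 0)
            = (u - ρy a u) * MvPolynomial.X 0 := by
          rw [map_mul]
          have hX : ρy a (MvPolynomial.X 0) = MvPolynomial.X 0 := by simp [ρy]
          rw [hX]; ring
        rw [this]
        exact hu.mul_right _
      · show (MvPolynomial.X 1 - MvPolynomial.C a) ∣
            (u * MvPolynomial.X 1 - ρy a (u * MvPolynomial.X 1))
        have : u * MvPolynomial.X 1 - ρy a (u * MvPolynomial.X 1)
            = (u - ρy a u) * MvPolynomial.X 1
              + (ρy a u) * (MvPolynomial.X 1 - MvPolynomial.C a) := by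
          rw [map_mul]
          have hX : ρy a (MvPolynomial.X 1) = MvPolynomial.C a := by simp [ρy]
          rw [hX]; ring
        rw [this]
        exact dvd_add (hu.mul_right _) (dvd_mul_left _ _)

lemma rho_x_eq (a : ℝ) (w : MvPolynomial (Fin 2) ℝ) :
    ρx a w = Polynomial.aeval (MvPolynomial.X 1 : MvPolynomial (Fin 2) ℝ) (Fx a w) := by
  have : (Polynomial.aeval (MvPolynomial.X 1 : MvPolynomial (Fin 2) ℝ)).comp (Fx a) = ρx a := by
    apply MvPolynomial.algHom_ext
    intro i
    fin_cases i <;> simp [Fx, ρx]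
  exact (congrFun (congrArg DFunLike.coe this) w).symm

lemma rho_y_eq (a : ℝ) (w : MvPolynomial (Fin 2) ℝ) :
    ρy a w = Polynomial.aeval (MvPolynomial.X 0 : MvPolynomial (Fin 2) ℝ) (Gy a w) := by
  have : (Polynomial.aeval (MvPolynomial.X 0 : MvPolynomial (Fin 2) ℝ)).comp (Gy a) = ρy a := by
    apply MvPolynomial.algHom_ext
    intro i
    fin_cases i <;> simp [Gy, ρy]
  exact (congrFun (congrArg DFunLike.coe this) w).symm

lemma dvd_of_Fx_zero {a : ℝ} {w : MvPolynomial (Fin 2) ℝ} (h : Fx a w = 0) :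
    (MvPolynomial.X 0 - MvPolynomial.C a) ∣ w := by
  have h2 : ρx a w = 0 := by rw [rho_x_eq, h, map_zero]
  have := sub_rho_x_dvd a w
  rwa [h2, sub_zero] at this

lemma dvd_of_Gy_zero {a : ℝ} {w : MvPolynomial (Fin 2) ℝ} (h : Gy a w = 0) :
    (MvPolynomial.X 1 - MvPolynomial.C a) ∣ w := by
  have h2 : ρy a w = 0 := by rw [rho_y_eq, h, map_zero]
  have := sub_rho_y_dvd a w
  rwa [h2, sub_zero] at this




lemma X_sub_C_ne_zero (i : Fin 2) (c : ℝ) :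
    (MvPolynomial.X i - MvPolynomial.C c : MvPolynomial (Fin 2) ℝ) ≠ 0 := by
  intro h
  have := congrArg (MvPolynomial.eval (fun _ => c + 1)) h
  simp at this

lemma C_ne_zero' (c : ℝ) (hc : c ≠ 0) : (MvPolynomial.C c : MvPolynomial (Fin 2) ℝ) ≠ 0 := by
  intro h
  have := congrArg (MvPolynomial.eval (fun _ => (0:ℝ))) h
  simp at this
  exact hc this

lemma factor_edges {v : MvPolynomial (Fin 2) ℝ} (h1 : Fx 1 v = 0) (h2 : Fx (-1) v = 0)
    (h3 : Gy 1 v = 0) (h4 : Gy (-1) v = 0) :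
    ∃ q, v = ((MvPolynomial.X 0 - MvPolynomial.C 1) * (MvPolynomial.X 0 - MvPolynomial.C (-1)) *
      (MvPolynomial.X 1 - MvPolynomial.C 1) * (MvPolynomial.X 1 - MvPolynomial.C (-1))) * q := by
  obtain ⟨w1, hw1⟩ := dvd_of_Fx_zero h1
  -- second factor
  have hρ2 : ρx (-1) v = 0 := by rw [rho_x_eq, h2, map_zero]
  rw [hw1, map_mul] at hρ2
  have hρ2' : (ρx (-1)) (MvPolynomial.X 0 - MvPolynomial.C 1) = MvPolynomial.C (-2) := by
    rw [map_sub, show (ρx (-1)) (MvPolynomial.X 0) = MvPolynomial.C (-1) by simp [ρx],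
      show (ρx (-1)) (MvPolynomial.C 1) = MvPolynomial.C 1 from by simp [ρx], ← map_sub]
    norm_num
  rw [hρ2'] at hρ2
  have hw1ρ : ρx (-1) w1 = 0 := by
    rcases mul_eq_zero.mp hρ2 with h | h
    · exact absurd h (C_ne_zero' _ (by norm_num))
    · exact h
  have hdvd2 : (MvPolynomial.X 0 - MvPolynomial.C (-1)) ∣ w1 := by
    have := sub_rho_x_dvd (-1) w1
    rwa [hw1ρ, sub_zero] at this
  obtain ⟨w2, hw2⟩ := hdvd2
  -- third factor
  have hρ3 : ρy 1 v = 0 := by rw [rho_y_eq, h3, map_zero]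
  rw [hw1, hw2, map_mul, map_mul] at hρ3
  have e1 : (ρy 1) (MvPolynomial.X 0 - MvPolynomial.C 1)
      = MvPolynomial.X 0 - MvPolynomial.C 1 := by
    rw [map_sub]; simp [ρy]
  have e2 : (ρy 1) (MvPolynomial.X 0 - MvPolynomial.C (-1))
      = MvPolynomial.X 0 - MvPolynomial.C (-1) := by
    rw [map_sub]; simp [ρy]
  rw [e1, e2] at hρ3
  have hw2ρ : ρy 1 w2 = 0 := by
    rcases mul_eq_zero.mp hρ3 with h | h
    · exact absurd h (X_sub_C_ne_zero 0 1)
    · rcases mul_eq_zero.mp h with h' | h'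
      · exact absurd h' (X_sub_C_ne_zero 0 (-1))
      · exact h'
  have hdvd3 : (MvPolynomial.X 1 - MvPolynomial.C 1) ∣ w2 := by
    have := sub_rho_y_dvd 1 w2
    rwa [hw2ρ, sub_zero] at this
  obtain ⟨w3, hw3⟩ := hdvd3
  -- fourth factor
  have hρ4 : ρy (-1) v = 0 := by rw [rho_y_eq, h4, map_zero]
  rw [hw1, hw2, hw3, map_mul, map_mul, map_mul] at hρ4
  have e1' : (ρy (-1)) (MvPolynomial.X 0 - MvPolynomial.C 1)
      = MvPolynomial.X 0 - MvPolynomial.C 1 := by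
    rw [map_sub]; simp [ρy]
  have e2' : (ρy (-1)) (MvPolynomial.X 0 - MvPolynomial.C (-1))
      = MvPolynomial.X 0 - MvPolynomial.C (-1) := by
    rw [map_sub]; simp [ρy]
  have e3' : (ρy (-1)) (MvPolynomial.X 1 - MvPolynomial.C 1) = MvPolynomial.C (-2) := by
    rw [map_sub, show (ρy (-1)) (MvPolynomial.X 1) = MvPolynomial.C (-1) by simp [ρy],
      show (ρy (-1)) (MvPolynomial.C 1) = MvPolynomial.C 1 from by simp [ρy], ← map_sub]
    norm_num
  rw [e1', e2', e3'] at hρ4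
  have hw3ρ : ρy (-1) w3 = 0 := by
    rcases mul_eq_zero.mp hρ4 with h | h
    · exact absurd h (X_sub_C_ne_zero 0 1)
    · rcases mul_eq_zero.mp h with h' | h'
      · exact absurd h' (X_sub_C_ne_zero 0 (-1))
      · rcases mul_eq_zero.mp h' with h'' | h''
        · exact absurd h'' (C_ne_zero' _ (by norm_num))
        · exact h''
  have hdvd4 : (MvPolynomial.X 1 - MvPolynomial.C (-1)) ∣ w3 := by
    have := sub_rho_y_dvd (-1) w3
    rwa [hw3ρ, sub_zero] at this
  obtain ⟨q, hq⟩ := hdvd4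
  exact ⟨q, by rw [hw1, hw2, hw3, hq]; ring⟩




lemma fsum_eq (d : Fin 2 →₀ ℕ) : (d.sum fun _ e => e) = d 0 + d 1 := by
  rw [Finsupp.sum_fintype _ _ (fun _ => rfl), Fin.sum_univ_two]

lemma weight_le_totalDegree' {q : MvPolynomial (Fin 2) ℝ} {d : Fin 2 →₀ ℕ}
    (hd : d ∈ q.support) : d 0 + d 1 ≤ q.totalDegree := by
  have h := MvPolynomial.le_totalDegree hd
  rw [fsum_eq] at h
  exact h

lemma coeff_zero_of_weight_gt {q : MvPolynomial (Fin 2) ℝ} {d : Fin 2 →₀ ℕ}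
    (h : q.totalDegree < d 0 + d 1) : q.coeff d = 0 := by
  by_contra hne
  exact absurd (weight_le_totalDegree' (MvPolynomial.mem_support_iff.mpr hne)) (by omega)

lemma support_bound {k : ℕ} {v q : MvPolynomial (Fin 2) ℝ}
    (hfac : v = ((MvPolynomial.X 0 - MvPolynomial.C 1) * (MvPolynomial.X 0 - MvPolynomial.C (-1)) *
      (MvPolynomial.X 1 - MvPolynomial.C 1) * (MvPolynomial.X 1 - MvPolynomial.C (-1))) * q)
    (hdeg : v.totalDegree ≤ 2*k+1) (hq : q ≠ 0) :
    ∀ d ∈ q.support, ((d 0 + d 1 : ℕ) : ℤ) ≤ 2*(k:ℤ) - 3 := by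
  classical
  set e20 : Fin 2 →₀ ℕ := Finsupp.single 0 2 with he20
  set e02 : Fin 2 →₀ ℕ := Finsupp.single 1 2 with he02
  obtain ⟨d₀, hd₀mem, hd₀sup⟩ := Finset.exists_mem_eq_sup q.support
    (MvPolynomial.support_nonempty.mpr hq) (fun d => d.sum fun _ e => e)
  have hN : q.totalDegree = d₀ 0 + d₀ 1 := by
    rw [MvPolynomial.totalDegree, hd₀sup, fsum_eq]
  set N := d₀ 0 + d₀ 1 with hNdef
  -- expand the product of linear factors
  have hg : ((MvPolynomial.X 0 - MvPolynomial.C 1) * (MvPolynomial.X 0 - MvPolynomial.C (-1)) *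
      (MvPolynomial.X 1 - MvPolynomial.C 1) * (MvPolynomial.X 1 - MvPolynomial.C (-1))
      : MvPolynomial (Fin 2) ℝ)
      = MvPolynomial.monomial (e20 + e02) 1 - MvPolynomial.monomial e20 1
        - MvPolynomial.monomial e02 1 + 1 := by
    rw [show (MvPolynomial.C (-1 : ℝ) : MvPolynomial (Fin 2) ℝ) = -1 by
        rw [map_neg, MvPolynomial.C_1],
      MvPolynomial.C_1]
    rw [show (MvPolynomial.monomial (e20 + e02) (1:ℝ)) =
        MvPolynomial.X 0 ^ 2 * MvPolynomial.X 1 ^ 2 by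
        rw [MvPolynomial.X_pow_eq_monomial, MvPolynomial.X_pow_eq_monomial,
          MvPolynomial.monomial_mul, mul_one],
      MvPolynomial.X_pow_eq_monomial.symm, MvPolynomial.X_pow_eq_monomial.symm]
    ring
  set E : Fin 2 →₀ ℕ := e20 + e02 + d₀ with hE
  have hcoeffv : MvPolynomial.coeff E v = MvPolynomial.coeff d₀ q := by
    rw [hfac, hg]
    have expand : (MvPolynomial.monomial (e20 + e02) (1:ℝ) - MvPolynomial.monomial e20 1
        - MvPolynomial.monomial e02 1 + 1) * q
        = MvPolynomial.monomial (e20 + e02) 1 * q - MvPolynomial.monomial e20 1 * q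
          - MvPolynomial.monomial e02 1 * q + q := by ring
    rw [expand, MvPolynomial.coeff_add, MvPolynomial.coeff_sub, MvPolynomial.coeff_sub]
    have hA : MvPolynomial.coeff E (MvPolynomial.monomial (e20 + e02) (1:ℝ) * q)
        = MvPolynomial.coeff d₀ q := by
      rw [hE, MvPolynomial.coeff_monomial_mul, one_mul]
    have hB : MvPolynomial.coeff E (MvPolynomial.monomial e20 (1:ℝ) * q) = 0 := by
      rw [show E = e20 + (e02 + d₀) by rw [hE, add_assoc], MvPolynomial.coeff_monomial_mul,
        one_mul]
      apply coeff_zero_of_weight_gt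
      simp only [Finsupp.add_apply, he02, Finsupp.single_apply]
      norm_num
      omega
    have hC : MvPolynomial.coeff E (MvPolynomial.monomial e02 (1:ℝ) * q) = 0 := by
      rw [show E = e02 + (e20 + d₀) by rw [hE, add_comm e20 e02, add_assoc],
        MvPolynomial.coeff_monomial_mul, one_mul]
      apply coeff_zero_of_weight_gt
      simp only [Finsupp.add_apply, he20, Finsupp.single_apply]
      norm_num
      omega
    have hD : MvPolynomial.coeff E q = 0 := by
      apply coeff_zero_of_weight_gt
      simp only [hE, Finsupp.add_apply, he20, he02, Finsupp.single_apply]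
      norm_num
      omega
    rw [hA, hB, hC, hD]
    ring
  have hqd₀ : MvPolynomial.coeff d₀ q ≠ 0 := MvPolynomial.mem_support_iff.mp hd₀mem
  have hEmem : E ∈ v.support := MvPolynomial.mem_support_iff.mpr (by rw [hcoeffv]; exact hqd₀)
  have hEw : E 0 + E 1 ≤ v.totalDegree := weight_le_totalDegree' hEmem
  have hEval : E 0 + E 1 = N + 4 := by
    simp only [hE, Finsupp.add_apply, he20, he02, Finsupp.single_apply]
    norm_num
    omega
  intro d hd
  have h1 : d 0 + d 1 ≤ q.totalDegree := weight_le_totalDegree' hd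
  rw [hN] at h1
  have : N + 4 ≤ 2 * k + 1 := by omega
  push_cast
  omega

end Stmt6

open Stmt6 Polynomial

theorem stmt_6 (k : ℕ)
    (I : Finset (ℝ × ℝ))
    (hI : ∀ r ∈ I, r.1 ∈ Set.Ioo (-1 : ℝ) 1 ∧ r.2 ∈ Set.Ioo (-1 : ℝ) 1)
    (hunisolv : ∀ q : MvPolynomial (Fin 2) ℝ,
      (∀ d ∈ q.support, ((d 0 + d 1 : ℕ) : ℤ) ≤ 2 * (k : ℤ) - 3) →
      (∀ r ∈ I, MvPolynomial.eval ![r.1, r.2] q = 0) → q = 0)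
    -- v ∈ ER_m(K̂) with m = 2k+1
    (v p : MvPolynomial (Fin 2) ℝ) (c₃ c₄ : ℝ)
    (hp : p.totalDegree ≤ 2 * k + 1)
    (hv : v = p + MvPolynomial.C c₃ *
        (MvPolynomial.X 0 ^ (2 * k + 1) * MvPolynomial.X 1 -
          MvPolynomial.X 0 * MvPolynomial.X 1 ^ (2 * k + 1)) +
      MvPolynomial.C c₄ *
        (MvPolynomial.X 0 ^ (2 * k + 2) - MvPolynomial.X 1 ^ (2 * k + 2)))
    -- all moments of order ≤ 2k of v on each of the four edges vanish
    (hmom : ∀ j ≤ 2 * k,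
      (∫ t in (-1 : ℝ)..1, MvPolynomial.eval ![1, t] v * t ^ j) = 0 ∧
      (∫ t in (-1 : ℝ)..1, MvPolynomial.eval ![-1, t] v * t ^ j) = 0 ∧
      (∫ t in (-1 : ℝ)..1, MvPolynomial.eval ![t, 1] v * t ^ j) = 0 ∧
      (∫ t in (-1 : ℝ)..1, MvPolynomial.eval ![t, -1] v * t ^ j) = 0)
    -- v vanishes at every point of I
    (hIv : ∀ r ∈ I, MvPolynomial.eval ![r.1, r.2] v = 0) :
    v = 0 := by
  classical
  obtain ⟨L, M, hLpar, hMpar, hLne, hMne, hdecomp⟩ := master k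
  obtain ⟨c₃', hv', hk0⟩ : ∃ c : ℝ, (v = p + MvPolynomial.C c *
        (MvPolynomial.X 0 ^ (2 * k + 1) * MvPolynomial.X 1 -
          MvPolynomial.X 0 * MvPolynomial.X 1 ^ (2 * k + 1)) +
      MvPolynomial.C c₄ *
        (MvPolynomial.X 0 ^ (2 * k + 2) - MvPolynomial.X 1 ^ (2 * k + 2))) ∧ (k = 0 → c = 0) := by
    rcases Nat.eq_zero_or_pos k with hk | hk
    · subst hk
      refine ⟨0, ?_, fun _ => rfl⟩
      have hS : (MvPolynomial.X 0 ^ (2 * 0 + 1) * MvPolynomial.X 1 -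
          MvPolynomial.X 0 * MvPolynomial.X 1 ^ (2 * 0 + 1) : MvPolynomial (Fin 2) ℝ) = 0 := by
        ring
      rw [hv, hS, mul_zero, mul_zero]
      simp
    · exact ⟨c₃, hv, fun h => by omega⟩
  -- the four edge-trace polynomials satisfy `Orth`
  have hO₁ : Orth k (Fx 1 v) := by
    intro j hj
    rw [intervalIntegral.integral_congr (g := fun t => MvPolynomial.eval ![(1:ℝ), t] v * t ^ j)
      (fun t _ => by rw [eval_Fx])]
    exact (hmom j hj).1
  have hO₂ : Orth k (Fx (-1) v) := by
    intro j hj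
    rw [intervalIntegral.integral_congr (g := fun t => MvPolynomial.eval ![(-1:ℝ), t] v * t ^ j)
      (fun t _ => by rw [eval_Fx])]
    exact (hmom j hj).2.1
  have hO₃ : Orth k (Gy 1 v) := by
    intro j hj
    rw [intervalIntegral.integral_congr (g := fun t => MvPolynomial.eval ![t, (1:ℝ)] v * t ^ j)
      (fun t _ => by rw [eval_Gy])]
    exact (hmom j hj).2.2.1
  have hO₄ : Orth k (Gy (-1) v) := by
    intro j hj
    rw [intervalIntegral.integral_congr (g := fun t => MvPolynomial.eval ![t, (-1:ℝ)] v * t ^ j)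
      (fun t _ => by rw [eval_Gy])]
    exact (hmom j hj).2.2.2
  -- structure of the traces
  have hoddpow : ((-1 : ℝ[X])) ^ (2*k+1) = -1 := Odd.neg_one_pow ⟨k, by ring⟩
  have hevenpow : ((-1 : ℝ[X])) ^ (2*k+2) = 1 := Even.neg_one_pow ⟨k+1, by ring⟩
  have hf₁ : Fx 1 v = Fx 1 p + C c₃' * (X - X^(2*k+1)) + C c₄ * (1 - X^(2*k+2)) := by
    rw [hv']
    simp only [map_add, map_mul, map_sub, map_pow, Fx, MvPolynomial.aeval_C,
      MvPolynomial.aeval_X, Matrix.cons_val_zero, Matrix.cons_val_one, Matrix.head_cons,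
      Polynomial.algebraMap_eq, Polynomial.C_1, one_pow]
    ring
  have hf₂ : Fx (-1) v = Fx (-1) p + C c₃' * (X^(2*k+1) - X) + C c₄ * (1 - X^(2*k+2)) := by
    rw [hv']
    simp only [map_add, map_mul, map_sub, map_pow, Fx, MvPolynomial.aeval_C,
      MvPolynomial.aeval_X, Matrix.cons_val_zero, Matrix.cons_val_one, Matrix.head_cons,
      Polynomial.algebraMap_eq, map_neg, Polynomial.C_1, hoddpow, hevenpow]
    ring
  have hf₃ : Gy 1 v = Gy 1 p + C c₃' * (X^(2*k+1) - X) + C c₄ * (X^(2*k+2) - 1) := by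
    rw [hv']
    simp only [map_add, map_mul, map_sub, map_pow, Gy, MvPolynomial.aeval_C,
      MvPolynomial.aeval_X, Matrix.cons_val_zero, Matrix.cons_val_one, Matrix.head_cons,
      Polynomial.algebraMap_eq, Polynomial.C_1, one_pow]
    ring
  have hf₄ : Gy (-1) v = Gy (-1) p + C c₃' * (X - X^(2*k+1)) + C c₄ * (X^(2*k+2) - 1) := by
    rw [hv']
    simp only [map_add, map_mul, map_sub, map_pow, Gy, MvPolynomial.aeval_C,
      MvPolynomial.aeval_X, Matrix.cons_val_zero, Matrix.cons_val_one, Matrix.head_cons,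
      Polynomial.algebraMap_eq, map_neg, Polynomial.C_1, hoddpow, hevenpow]
    ring
  -- coefficient extraction
  set A := MvPolynomial.coeff (Finsupp.single 1 (2*k+1)) p with hAdef
  set B := MvPolynomial.coeff (Finsupp.single 0 (2*k+1)) p with hBdef
  have hFxp_deg : ∀ c : ℝ, (Fx c p).natDegree ≤ 2*k+1 := fun c => natDegree_Fx_le c p _ hp
  have hGyp_deg : ∀ c : ℝ, (Gy c p).natDegree ≤ 2*k+1 := fun c => natDegree_Gy_le c p _ hp
  have t11 : (C c₃' * (X - X^(2*k+1)) : ℝ[X]).coeff (2*k+1) = -c₃' := by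
    rcases Nat.eq_zero_or_pos k with hk | hk
    · subst hk; rw [hk0 rfl]; simp
    · rw [coeff_C_mul, coeff_sub, coeff_X, coeff_X_pow,
        if_neg (show ¬(1 = 2*k+1) by omega), if_pos rfl]; ring
  have t11' : (C c₃' * (X^(2*k+1) - X) : ℝ[X]).coeff (2*k+1) = c₃' := by
    rcases Nat.eq_zero_or_pos k with hk | hk
    · subst hk; rw [hk0 rfl]; simp
    · rw [coeff_C_mul, coeff_sub, coeff_X_pow, coeff_X, if_pos rfl,
        if_neg (show ¬(1 = 2*k+1) by omega)]; ring
  have t12 : (C c₃' * (X - X^(2*k+1)) : ℝ[X]).coeff (2*k+2) = 0 := by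
    rw [coeff_C_mul, coeff_sub, coeff_X, coeff_X_pow,
      if_neg (show ¬(1 = 2*k+2) by omega), if_neg (show ¬(2*k+2 = 2*k+1) by omega)]; ring
  have t12' : (C c₃' * (X^(2*k+1) - X) : ℝ[X]).coeff (2*k+2) = 0 := by
    rw [coeff_C_mul, coeff_sub, coeff_X_pow, coeff_X,
      if_neg (show ¬(2*k+2 = 2*k+1) by omega), if_neg (show ¬(1 = 2*k+2) by omega)]; ring
  have t21 : (C c₄ * (1 - X^(2*k+2)) : ℝ[X]).coeff (2*k+1) = 0 := by
    rw [coeff_C_mul, coeff_sub, coeff_one, coeff_X_pow,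
      if_neg (show ¬(2*k+1 = 0) by omega), if_neg (show ¬(2*k+1 = 2*k+2) by omega)]; ring
  have t21' : (C c₄ * (X^(2*k+2) - 1) : ℝ[X]).coeff (2*k+1) = 0 := by
    rw [coeff_C_mul, coeff_sub, coeff_X_pow, coeff_one,
      if_neg (show ¬(2*k+1 = 2*k+2) by omega), if_neg (show ¬(2*k+1 = 0) by omega)]; ring
  have t22 : (C c₄ * (1 - X^(2*k+2)) : ℝ[X]).coeff (2*k+2) = -c₄ := by
    rw [coeff_C_mul, coeff_sub, coeff_one, coeff_X_pow,
      if_neg (show ¬(2*k+2 = 0) by omega), if_pos rfl]; ring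
  have t22' : (C c₄ * (X^(2*k+2) - 1) : ℝ[X]).coeff (2*k+2) = c₄ := by
    rw [coeff_C_mul, coeff_sub, coeff_X_pow, coeff_one, if_pos rfl,
      if_neg (show ¬(2*k+2 = 0) by omega)]; ring
  have hc11 : (Fx 1 v).coeff (2*k+1) = A - c₃' := by
    rw [hf₁, coeff_add, coeff_add, coeff_Fx 1 p (2*k+1) hp (by omega), t11, t21, ← hAdef]; ring
  have hc12 : (Fx 1 v).coeff (2*k+2) = -c₄ := by
    rw [hf₁, coeff_add, coeff_add,
      Polynomial.coeff_eq_zero_of_natDegree_lt (lt_of_le_of_lt (hFxp_deg 1) (by omega)),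
      t12, t22]; ring
  have hc21 : (Fx (-1) v).coeff (2*k+1) = A + c₃' := by
    rw [hf₂, coeff_add, coeff_add, coeff_Fx (-1) p (2*k+1) hp (by omega), t11', t21, ← hAdef]; ring
  have hc22 : (Fx (-1) v).coeff (2*k+2) = -c₄ := by
    rw [hf₂, coeff_add, coeff_add,
      Polynomial.coeff_eq_zero_of_natDegree_lt (lt_of_le_of_lt (hFxp_deg (-1)) (by omega)),
      t12', t22]; ring
  have hc31 : (Gy 1 v).coeff (2*k+1) = B + c₃' := by
    rw [hf₃, coeff_add, coeff_add, coeff_Gy 1 p (2*k+1) hp (by omega), t11', t21', ← hBdef]; ring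
  have hc32 : (Gy 1 v).coeff (2*k+2) = c₄ := by
    rw [hf₃, coeff_add, coeff_add,
      Polynomial.coeff_eq_zero_of_natDegree_lt (lt_of_le_of_lt (hGyp_deg 1) (by omega)),
      t12', t22']; ring
  have hc41 : (Gy (-1) v).coeff (2*k+1) = B - c₃' := by
    rw [hf₄, coeff_add, coeff_add, coeff_Gy (-1) p (2*k+1) hp (by omega), t11, t21', ← hBdef]; ring
  have hc42 : (Gy (-1) v).coeff (2*k+2) = c₄ := by
    rw [hf₄, coeff_add, coeff_add,
      Polynomial.coeff_eq_zero_of_natDegree_lt (lt_of_le_of_lt (hGyp_deg (-1)) (by omega)),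
      t12, t22']; ring
  -- natDegree bounds for the traces
  have ndeg3 : ∀ (a b c : ℝ[X]), a.natDegree ≤ 2*k+2 → b.natDegree ≤ 2*k+2 →
      c.natDegree ≤ 2*k+2 → (a + b + c).natDegree ≤ 2*k+2 := by
    intro a b c ha hb hc
    exact le_trans (natDegree_add_le _ _)
      (max_le (le_trans (natDegree_add_le _ _) (max_le ha hb)) hc)
  have dS : ((X - X^(2*k+1)) : ℝ[X]).natDegree ≤ 2*k+2 :=
    le_trans (natDegree_sub_le _ _)
      (max_le (by rw [natDegree_X]; omega) (by rw [natDegree_X_pow]; omega))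
  have dS' : ((X^(2*k+1) - X) : ℝ[X]).natDegree ≤ 2*k+2 :=
    le_trans (natDegree_sub_le _ _)
      (max_le (by rw [natDegree_X_pow]; omega) (by rw [natDegree_X]; omega))
  have dT : ((1 - X^(2*k+2)) : ℝ[X]).natDegree ≤ 2*k+2 :=
    le_trans (natDegree_sub_le _ _)
      (max_le (by rw [natDegree_one]; omega) (by rw [natDegree_X_pow]))
  have dT' : ((X^(2*k+2) - 1) : ℝ[X]).natDegree ≤ 2*k+2 :=
    le_trans (natDegree_sub_le _ _)
      (max_le (by rw [natDegree_X_pow]) (by rw [natDegree_one]; omega))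
  have hnd₁ : (Fx 1 v).natDegree ≤ 2*k+2 := by
    rw [hf₁]
    exact ndeg3 _ _ _ (le_trans (hFxp_deg 1) (by omega))
      (le_trans (natDegree_C_mul_le _ _) dS) (le_trans (natDegree_C_mul_le _ _) dT)
  have hnd₂ : (Fx (-1) v).natDegree ≤ 2*k+2 := by
    rw [hf₂]
    exact ndeg3 _ _ _ (le_trans (hFxp_deg (-1)) (by omega))
      (le_trans (natDegree_C_mul_le _ _) dS') (le_trans (natDegree_C_mul_le _ _) dT)
  have hnd₃ : (Gy 1 v).natDegree ≤ 2*k+2 := by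
    rw [hf₃]
    exact ndeg3 _ _ _ (le_trans (hGyp_deg 1) (by omega))
      (le_trans (natDegree_C_mul_le _ _) dS') (le_trans (natDegree_C_mul_le _ _) dT')
  have hnd₄ : (Gy (-1) v).natDegree ≤ 2*k+2 := by
    rw [hf₄]
    exact ndeg3 _ _ _ (le_trans (hGyp_deg (-1)) (by omega))
      (le_trans (natDegree_C_mul_le _ _) dS) (le_trans (natDegree_C_mul_le _ _) dT')
  -- decompose the traces
  have hdec₁ := hdecomp _ hO₁ hnd₁
  have hdec₂ := hdecomp _ hO₂ hnd₂
  have hdec₃ := hdecomp _ hO₃ hnd₃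
  have hdec₄ := hdecomp _ hO₄ hnd₄
  rw [hc11, hc12] at hdec₁
  rw [hc21, hc22] at hdec₂
  rw [hc31, hc32] at hdec₃
  rw [hc41, hc42] at hdec₄
  set lam := L.eval 1 with hlam
  set mu := M.eval 1 with hmu
  have he₁1 : (Fx 1 v).eval 1 = (A - c₃') * lam + (-c₄) * mu := by
    rw [hdec₁]; simp only [eval_add, eval_mul, eval_C]; rfl
  have he₁m : (Fx 1 v).eval (-1) = -((A - c₃') * lam) + (-c₄) * mu := by
    rw [hdec₁]; simp only [eval_add, eval_mul, eval_C, hLpar, hMpar]; ring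
  have he₂1 : (Fx (-1) v).eval 1 = (A + c₃') * lam + (-c₄) * mu := by
    rw [hdec₂]; simp only [eval_add, eval_mul, eval_C]; rfl
  have he₂m : (Fx (-1) v).eval (-1) = -((A + c₃') * lam) + (-c₄) * mu := by
    rw [hdec₂]; simp only [eval_add, eval_mul, eval_C, hLpar, hMpar]; ring
  have he₃1 : (Gy 1 v).eval 1 = (B + c₃') * lam + c₄ * mu := by
    rw [hdec₃]; simp only [eval_add, eval_mul, eval_C]; rfl
  have he₃m : (Gy 1 v).eval (-1) = -((B + c₃') * lam) + c₄ * mu := by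
    rw [hdec₃]; simp only [eval_add, eval_mul, eval_C, hLpar, hMpar]; ring
  have he₄1 : (Gy (-1) v).eval 1 = (B - c₃') * lam + c₄ * mu := by
    rw [hdec₄]; simp only [eval_add, eval_mul, eval_C]; rfl
  have he₄m : (Gy (-1) v).eval (-1) = -((B - c₃') * lam) + c₄ * mu := by
    rw [hdec₄]; simp only [eval_add, eval_mul, eval_C, hLpar, hMpar]; ring
  -- corner compatibility
  have hcor1 : (Fx 1 v).eval 1 = (Gy 1 v).eval 1 := by rw [eval_Fx, eval_Gy]
  have hcor2 : (Fx 1 v).eval (-1) = (Gy (-1) v).eval 1 := by rw [eval_Fx, eval_Gy]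
  have hcor3 : (Fx (-1) v).eval 1 = (Gy 1 v).eval (-1) := by rw [eval_Fx, eval_Gy]
  have hcor4 : (Fx (-1) v).eval (-1) = (Gy (-1) v).eval (-1) := by rw [eval_Fx, eval_Gy]
  have e1 : A*lam - B*lam - 2*(c₃'*lam) - 2*(c₄*mu) = 0 := by
    have h := hcor1; rw [he₁1, he₃1] at h; linear_combination h
  have e2 : -(A*lam) - B*lam + 2*(c₃'*lam) - 2*(c₄*mu) = 0 := by
    have h := hcor2; rw [he₁m, he₄1] at h; linear_combination h
  have e3 : A*lam + B*lam + 2*(c₃'*lam) - 2*(c₄*mu) = 0 := by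
    have h := hcor3; rw [he₂1, he₃m] at h; linear_combination h
  have e4 : -(A*lam) + B*lam - 2*(c₃'*lam) - 2*(c₄*mu) = 0 := by
    have h := hcor4; rw [he₂m, he₄m] at h; linear_combination h
  have hc4mu : c₄ * mu = 0 := by linarith
  have hc3lam : c₃' * lam = 0 := by linarith
  have hAlam : A * lam = 0 := by linarith
  have hBlam : B * lam = 0 := by linarith
  have hc₄0 : c₄ = 0 := (mul_eq_zero.mp hc4mu).resolve_right hMne
  have hc₃0 : c₃' = 0 := (mul_eq_zero.mp hc3lam).resolve_right hLne
  have hA0 : A = 0 := (mul_eq_zero.mp hAlam).resolve_right hLne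
  have hB0 : B = 0 := (mul_eq_zero.mp hBlam).resolve_right hLne
  have hf₁0 : Fx 1 v = 0 := by rw [hdec₁, hA0, hc₃0, hc₄0]; simp
  have hf₂0 : Fx (-1) v = 0 := by rw [hdec₂, hA0, hc₃0, hc₄0]; simp
  have hf₃0 : Gy 1 v = 0 := by rw [hdec₃, hB0, hc₃0, hc₄0]; simp
  have hf₄0 : Gy (-1) v = 0 := by rw [hdec₄, hB0, hc₃0, hc₄0]; simp
  -- v has degree ≤ 2k+1
  have hvdeg : v.totalDegree ≤ 2*k+1 := by
    have hvp : v = p := by rw [hv', hc₃0, hc₄0]; simp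
    rw [hvp]; exact hp
  obtain ⟨q, hfac⟩ := factor_edges hf₁0 hf₂0 hf₃0 hf₄0
  by_cases hq : q = 0
  · rw [hfac, hq, mul_zero]
  · have hsupp := support_bound hfac hvdeg hq
    have heval : ∀ r ∈ I, MvPolynomial.eval ![r.1, r.2] q = 0 := by
      intro r hr
      have h0 := hIv r hr
      rw [hfac] at h0
      obtain ⟨⟨hr1a, hr1b⟩, hr2a, hr2b⟩ := hI r hr
      simp only [map_mul, map_sub, MvPolynomial.eval_X, MvPolynomial.eval_C,
        Matrix.cons_val_zero, Matrix.cons_val_one, Matrix.head_cons] at h0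
      have h1 : r.1 - 1 ≠ 0 := sub_ne_zero.mpr (ne_of_lt hr1b)
      have h2 : r.1 - (-1) ≠ 0 := sub_ne_zero.mpr (ne_of_gt hr1a)
      have h3 : r.2 - 1 ≠ 0 := sub_ne_zero.mpr (ne_of_lt hr2b)
      have h4 : r.2 - (-1) ≠ 0 := sub_ne_zero.mpr (ne_of_gt hr2a)
      exact (mul_eq_zero.mp h0).resolve_left
        (mul_ne_zero (mul_ne_zero (mul_ne_zero h1 h2) h3) h4)
    rw [hfac, hunisolv q hsupp heval, mul_zero]
end

section
/- Let k ≥ 1 and let g_{-k}, …, g_{-1}, g_1, …, g_k be the zeros of the Legendre polynomial L_{2k}; they are 2k distinct nonzero points of (−1,1) and can be indexed so that g_{-i} = −g_i for all i. Then every real polynomial v in two variables whose restrictions to the four edges of K̂ = [−1,1]² — the univariate polynomials v(1,·), v(−1,·), v(·,1), v(·,−1) — have degree ≤ 2k (in particular, every v ∈ R_{2k}^{+}(K̂)) satisfies Σ_{i=−k, i≠0}^{k} [v(1,g_i) − v(−1,g_i) − v(g_i,1) + v(g_i,−1)] / (g_i (1−g_i²) ∏_{j=1, j≠|i|}^{k}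 (g_i² − g_j²)) = 0. -/
open Polynomial Finset

lemma aux_leadingCoeff_basis {ι : Type*} [DecidableEq ι] (T : Finset ι) (s : ι → ℝ)
    (hinj : Set.InjOn s T) {i : ι} (hi : i ∈ T) :
    (Lagrange.basis T s i).leadingCoeff = (∏ j ∈ T.erase i, (s i - s j))⁻¹ := by
  rw [Lagrange.basis, Polynomial.leadingCoeff_prod, ← Finset.prod_inv_distrib]
  refine Finset.prod_congr rfl fun j hj => ?_
  obtain ⟨hij, hjT⟩ := Finset.mem_erase.mp hj
  rw [Lagrange.basisDivisor, leadingCoeff_mul, leadingCoeff_C, (monic_X_sub_C _).leadingCoeff,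
    mul_one]

lemma aux_power_sum {ι : Type*} [DecidableEq ι] (T : Finset ι) (s : ι → ℝ)
    (hinj : Set.InjOn s T) (l : ℕ) (hl : l + 1 < T.card) :
    ∑ i ∈ T, (s i) ^ l / ∏ j ∈ T.erase i, (s i - s j) = 0 := by
  have hdeg : (Polynomial.X ^ l : Polynomial ℝ).degree < T.card := by
    rw [Polynomial.degree_X_pow]
    exact_mod_cast lt_trans (Nat.lt_succ_self l) hl
  have h := Lagrange.eq_interpolate (f := (Polynomial.X ^ l : Polynomial ℝ)) hinj hdeg
  have h2 := congrArg (fun p => Polynomial.coeff p (T.card - 1)) h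
  simp only [Lagrange.interpolate_apply, Polynomial.finset_sum_coeff, Polynomial.coeff_C_mul,
    Polynomial.coeff_X_pow, Polynomial.eval_pow, Polynomial.eval_X] at h2
  have hb : ∀ i ∈ T, (Lagrange.basis T s i).coeff (T.card - 1)
      = (∏ j ∈ T.erase i, (s i - s j))⁻¹ := by
    intro i hi
    rw [← Lagrange.natDegree_basis hinj hi, Polynomial.coeff_natDegree,
      aux_leadingCoeff_basis T s hinj hi]
  rw [if_neg (by omega), Finset.sum_congr rfl (fun i hi => by rw [hb i hi])] at h2
  rw [Finset.sum_congr rfl fun i (_ : i ∈ T) => div_eq_mul_inv ((s i)^l) (∏ j ∈ T.erase i, (s i - s j))]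
  exact h2.symm

lemma aux_shift {ι : Type*} [DecidableEq ι] (T : Finset ι) (s : ι → ℝ)
    (hinj : Set.InjOn s T) (hs1 : ∀ i ∈ T, s i ≠ 1) (m : ℕ) (hm : m + 1 ≤ T.card) :
    ∑ i ∈ T, (s i) ^ m / ((1 - s i) * ∏ j ∈ T.erase i, (s i - s j)) =
    ∑ i ∈ T, 1 / ((1 - s i) * ∏ j ∈ T.erase i, (s i - s j)) := by
  rw [← sub_eq_zero, ← Finset.sum_sub_distrib]
  have hterm : ∀ i ∈ T,
      (s i) ^ m / ((1 - s i) * ∏ j ∈ T.erase i, (s i - s j))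
        - 1 / ((1 - s i) * ∏ j ∈ T.erase i, (s i - s j))
      = -(∑ l ∈ Finset.range m, (s i) ^ l / ∏ j ∈ T.erase i, (s i - s j)) := by
    intro i hi
    rw [div_sub_div_same,
      show (s i) ^ m - 1 = (1 - s i) * (-(∑ l ∈ Finset.range m, (s i) ^ l)) by
        linear_combination (-1 : ℝ) * geom_sum_mul (s i) m,
      mul_div_mul_left _ _ (sub_ne_zero_of_ne (Ne.symm (hs1 i hi))), neg_div, Finset.sum_div]
  rw [Finset.sum_congr rfl hterm, sum_neg_distrib, neg_eq_zero, Finset.sum_comm]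
  exact Finset.sum_eq_zero fun l hl => aux_power_sum T s hinj l
    (by have := Finset.mem_range.mp hl; omega)

lemma aux_eval_aeval (v : MvPolynomial (Fin 2) ℝ) (a b : Polynomial ℝ) (t : ℝ) :
    Polynomial.eval t (MvPolynomial.aeval ![a, b] v) =
      MvPolynomial.eval ![a.eval t, b.eval t] v := by
  induction v using MvPolynomial.induction_on with
  | C c => simp
  | add p q hp hq => simp [hp, hq]
  | mul_X p i hp =>
    simp only [map_mul, MvPolynomial.aeval_X, MvPolynomial.eval_X, Polynomial.eval_mul, hp]
    congr 1
    fin_cases i <;> simp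

lemma aux_main (T : Finset ℤ) (g : ℤ → ℝ) (k : ℕ) (hcard : T.card = k)
    (hsinj : Set.InjOn (fun j : ℤ => (g j) ^ 2) ↑T) (hs1 : ∀ i ∈ T, (g i) ^ 2 ≠ (1 : ℝ))
    (hg0 : ∀ i ∈ T, g i ≠ 0)
    (F : Polynomial ℝ) (hF : F.natDegree < 2 * k + 1) (hF1 : F.eval 1 = F.eval (-1)) :
    ∑ i ∈ T, (F.eval (g i) - F.eval (-(g i))) /
      (g i * ((1 - (g i) ^ 2) * ∏ j ∈ T.erase i, ((g i) ^ 2 - (g j) ^ 2))) = 0 := by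
  set C : ℝ := ∑ i ∈ T, 1 / ((1 - (g i) ^ 2) * ∏ j ∈ T.erase i, ((g i) ^ 2 - (g j) ^ 2)) with hC
  have hA : ∀ n ∈ Finset.range (2 * k + 1),
      ∑ i ∈ T, ((g i) ^ n - (-(g i)) ^ n) /
        (g i * ((1 - (g i) ^ 2) * ∏ j ∈ T.erase i, ((g i) ^ 2 - (g j) ^ 2)))
      = ((1 : ℝ) ^ n - (-1 : ℝ) ^ n) * C := by
    intro n hn
    rcases Nat.even_or_odd n with he | ho
    · have h0 : ((1 : ℝ) ^ n - (-1 : ℝ) ^ n) = 0 := by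
        rw [Even.neg_one_pow he, one_pow, sub_self]
      rw [h0, zero_mul]
      exact Finset.sum_eq_zero fun i _ => by rw [Even.neg_pow he, sub_self, zero_div]
    · obtain ⟨m, rfl⟩ := ho
      have hmk : m + 1 ≤ k := by have := Finset.mem_range.mp hn; omega
      have hshift := aux_shift T (fun j : ℤ => (g j) ^ 2) hsinj hs1 m (by rw [hcard]; omega)
      have hRHS : ((1 : ℝ) ^ (2 * m + 1) - (-1 : ℝ) ^ (2 * m + 1)) = 2 := by
        rw [one_pow, Odd.neg_one_pow ⟨m, by ring⟩]; norm_num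
      rw [hRHS]
      calc ∑ i ∈ T, ((g i) ^ (2 * m + 1) - (-(g i)) ^ (2 * m + 1)) /
            (g i * ((1 - (g i) ^ 2) * ∏ j ∈ T.erase i, ((g i) ^ 2 - (g j) ^ 2)))
          = ∑ i ∈ T, 2 * (((g i) ^ 2) ^ m /
            ((1 - (g i) ^ 2) * ∏ j ∈ T.erase i, ((g i) ^ 2 - (g j) ^ 2))) := by
            refine Finset.sum_congr rfl fun i hi => ?_
            rw [Odd.neg_pow ⟨m, by ring⟩, sub_neg_eq_add,
              show (g i) ^ (2 * m + 1) + (g i) ^ (2 * m + 1)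
                  = g i * (2 * ((g i ^ 2) ^ m)) from by ring,
              mul_div_mul_left _ _ (hg0 i hi), mul_div_assoc]
        _ = 2 * ∑ i ∈ T, ((g i) ^ 2) ^ m /
            ((1 - (g i) ^ 2) * ∏ j ∈ T.erase i, ((g i) ^ 2 - (g j) ^ 2)) := by
            rw [Finset.mul_sum]
        _ = 2 * C := by rw [hshift]
  calc ∑ i ∈ T, (F.eval (g i) - F.eval (-(g i))) /
        (g i * ((1 - (g i) ^ 2) * ∏ j ∈ T.erase i, ((g i) ^ 2 - (g j) ^ 2)))
      = ∑ i ∈ T, ∑ n ∈ Finset.range (2 * k + 1), (F.coeff n * ((g i) ^ n - (-(g i)) ^ n)) /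
        (g i * ((1 - (g i) ^ 2) * ∏ j ∈ T.erase i, ((g i) ^ 2 - (g j) ^ 2))) := by
        refine Finset.sum_congr rfl fun i _ => ?_
        rw [Polynomial.eval_eq_sum_range' hF, Polynomial.eval_eq_sum_range' hF,
          ← Finset.sum_sub_distrib, ← Finset.sum_div]
        congr 1
        exact Finset.sum_congr rfl fun n _ => by ring
    _ = ∑ n ∈ Finset.range (2 * k + 1), F.coeff n * ∑ i ∈ T, ((g i) ^ n - (-(g i)) ^ n) /
        (g i * ((1 - (g i) ^ 2) * ∏ j ∈ T.erase i, ((g i) ^ 2 - (g j) ^ 2))) := by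
        rw [Finset.sum_comm]
        refine Finset.sum_congr rfl fun n _ => ?_
        rw [Finset.mul_sum]
        exact Finset.sum_congr rfl fun i _ => by rw [mul_div_assoc]
    _ = ∑ n ∈ Finset.range (2 * k + 1), F.coeff n * (((1 : ℝ) ^ n - (-1 : ℝ) ^ n) * C) := by
        exact Finset.sum_congr rfl fun n hn => by rw [hA n hn]
    _ = (F.eval 1 - F.eval (-1)) * C := by
        rw [Polynomial.eval_eq_sum_range' hF, Polynomial.eval_eq_sum_range' hF,
          ← Finset.sum_sub_distrib, Finset.sum_mul]
        exact Finset.sum_congr rfl fun n _ => by ring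
    _ = 0 := by rw [hF1, sub_self, zero_mul]


theorem stmt_8 (k : ℕ) (hk : 1 ≤ k) (g : ℤ → ℝ)
    (hzero : ∀ i ∈ (Finset.Icc (-(k : ℤ)) (k : ℤ)).erase 0,
      (legendreP (2 * k)).eval (g i) = 0)
    (hmem : ∀ i ∈ (Finset.Icc (-(k : ℤ)) (k : ℤ)).erase 0, g i ∈ Set.Ioo (-1 : ℝ) 1)
    (hne : ∀ i ∈ (Finset.Icc (-(k : ℤ)) (k : ℤ)).erase 0, g i ≠ 0)
    (hinj : Set.InjOn g ((Finset.Icc (-(k : ℤ)) (k : ℤ)).erase 0))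
    (hsym : ∀ i ∈ (Finset.Icc (-(k : ℤ)) (k : ℤ)).erase 0, g (-i) = -g i)
    (v : MvPolynomial (Fin 2) ℝ)
    (h1 : (MvPolynomial.aeval ![(1 : Polynomial ℝ), Polynomial.X] v).natDegree ≤ 2 * k)
    (h2 : (MvPolynomial.aeval ![(-1 : Polynomial ℝ), Polynomial.X] v).natDegree ≤ 2 * k)
    (h3 : (MvPolynomial.aeval ![(Polynomial.X : Polynomial ℝ), 1] v).natDegree ≤ 2 * k)
    (h4 : (MvPolynomial.aeval ![(Polynomial.X : Polynomial ℝ), -1] v).natDegree ≤ 2 * k) :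
    ∑ i ∈ (Finset.Icc (-(k : ℤ)) (k : ℤ)).erase 0,
      (MvPolynomial.eval ![1, g i] v - MvPolynomial.eval ![-1, g i] v -
        MvPolynomial.eval ![g i, 1] v + MvPolynomial.eval ![g i, -1] v) /
      (g i * (1 - (g i) ^ 2) *
        ∏ j ∈ (Finset.Icc (1 : ℤ) (k : ℤ)).erase |i|, ((g i) ^ 2 - (g j) ^ 2)) = 0 := by
  classical
  set T : Finset ℤ := Finset.Icc (1 : ℤ) (k : ℤ) with hT
  set E : Finset ℤ := (Finset.Icc (-(k : ℤ)) (k : ℤ)).erase 0 with hEdef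
  have hmemT : ∀ i : ℤ, i ∈ T ↔ 1 ≤ i ∧ i ≤ (k : ℤ) := fun i => Finset.mem_Icc
  have hmemE : ∀ i : ℤ, i ∈ E ↔ i ≠ 0 ∧ -(k : ℤ) ≤ i ∧ i ≤ (k : ℤ) := by
    intro i
    simp [hEdef, Finset.mem_erase, Finset.mem_Icc, and_assoc]
  have hTsub : ∀ i ∈ T, i ∈ E := fun i hi =>
    (hmemE i).mpr (by have := (hmemT i).mp hi; omega)
  have hTneg : ∀ i ∈ T, -i ∈ E := fun i hi =>
    (hmemE (-i)).mpr (by have := (hmemT i).mp hi; omega)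
  have hcardT : T.card = k := by rw [hT, Int.card_Icc]; omega
  have hg0 : ∀ i ∈ T, g i ≠ 0 := fun i hi => hne i (hTsub i hi)
  have hsinj : Set.InjOn (fun j : ℤ => (g j) ^ 2) ↑T := by
    intro i hi j hj hij
    simp only at hij
    have hiT := Finset.mem_coe.mp hi
    have hjT := Finset.mem_coe.mp hj
    have hiE := hTsub i hiT
    have hjE := hTsub j hjT
    have h2' : (g i - g j) * (g i + g j) = 0 := by linear_combination hij
    rcases mul_eq_zero.mp h2' with h | h
    · exact hinj hiE hjE (by linarith [sub_eq_zero.mp h])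
    · have hgj : g (-j) = -g j := hsym j hjE
      have heq : g i = g (-j) := by rw [hgj]; linarith
      have hij' := hinj hiE (hTneg j hjT) heq
      exfalso
      have := (hmemT i).mp hiT
      have := (hmemT j).mp hjT
      omega
  have hs1 : ∀ i ∈ T, (g i) ^ 2 ≠ (1 : ℝ) := by
    intro i hi h
    obtain ⟨hl, hr⟩ := hmem i (hTsub i hi)
    nlinarith
  set F : Polynomial ℝ :=
    MvPolynomial.aeval ![(1 : Polynomial ℝ), Polynomial.X] v
      - MvPolynomial.aeval ![(-1 : Polynomial ℝ), Polynomial.X] v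
      - MvPolynomial.aeval ![(Polynomial.X : Polynomial ℝ), 1] v
      + MvPolynomial.aeval ![(Polynomial.X : Polynomial ℝ), -1] v with hFdef
  have hFdeg : F.natDegree < 2 * k + 1 := by
    have : F.natDegree ≤ 2 * k := by
      refine le_trans (Polynomial.natDegree_add_le _ _) (max_le ?_ h4)
      refine le_trans (Polynomial.natDegree_sub_le _ _) (max_le ?_ h3)
      exact le_trans (Polynomial.natDegree_sub_le _ _) (max_le h1 h2)
    omega
  have hFeval : ∀ t : ℝ, F.eval t =
      MvPolynomial.eval ![1, t] v - MvPolynomial.eval ![-1, t] v -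
        MvPolynomial.eval ![t, 1] v + MvPolynomial.eval ![t, -1] v := by
    intro t
    simp only [hFdef, Polynomial.eval_add, Polynomial.eval_sub, aux_eval_aeval,
      Polynomial.eval_one, Polynomial.eval_X, Polynomial.eval_neg]
  have hF1 : F.eval 1 = F.eval (-1) := by rw [hFeval, hFeval]; ring
  have hE : E = T ∪ T.image (fun i => -i) := by
    ext i
    simp only [hmemE, Finset.mem_union, hmemT, Finset.mem_image]
    constructor
    · rintro ⟨h0, ha, hb⟩
      by_cases hc : 1 ≤ i
      · exact Or.inl ⟨hc, hb⟩
      · exact Or.inr ⟨-i, ⟨by omega, by omega⟩, by omega⟩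
    · rintro (⟨ha, hb⟩ | ⟨a, ⟨ha, hb⟩, hc⟩) <;> omega
  have hdisj : Disjoint T (T.image fun i => -i) := by
    rw [Finset.disjoint_left]
    intro a ha hb
    obtain ⟨b, hb1, hb2⟩ := Finset.mem_image.mp hb
    have := (hmemT a).mp ha
    have := (hmemT b).mp hb1
    omega
  rw [hE, Finset.sum_union hdisj,
    Finset.sum_image (fun x _ y _ h => by omega : ∀ x ∈ T, ∀ y ∈ T, -x = -y → x = y),
    ← Finset.sum_add_distrib]
  have hpair : ∀ i ∈ T,
      ((MvPolynomial.eval ![1, g i] v - MvPolynomial.eval ![-1, g i] v -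
        MvPolynomial.eval ![g i, 1] v + MvPolynomial.eval ![g i, -1] v) /
      (g i * (1 - (g i) ^ 2) * ∏ j ∈ T.erase |i|, ((g i) ^ 2 - (g j) ^ 2)) +
      (MvPolynomial.eval ![1, g (-i)] v - MvPolynomial.eval ![-1, g (-i)] v -
        MvPolynomial.eval ![g (-i), 1] v + MvPolynomial.eval ![g (-i), -1] v) /
      (g (-i) * (1 - (g (-i)) ^ 2) * ∏ j ∈ T.erase |(-i)|, ((g (-i)) ^ 2 - (g j) ^ 2)))
      = (F.eval (g i) - F.eval (-(g i))) /
        (g i * ((1 - (g i) ^ 2) * ∏ j ∈ T.erase i, ((g i) ^ 2 - (g j) ^ 2))) := by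
    intro i hi
    have hiT := (hmemT i).mp hi
    have habs : |i| = i := abs_of_pos (by omega)
    have habs' : |(-i)| = i := by rw [abs_neg, habs]
    have hgneg : g (-i) = -g i := hsym i (hTsub i hi)
    simp only [habs, habs', hgneg, neg_sq]
    rw [hFeval, hFeval,
      show -g i * (1 - (g i) ^ 2) * (∏ j ∈ T.erase i, ((g i) ^ 2 - (g j) ^ 2))
          = -(g i * (1 - (g i) ^ 2) * ∏ j ∈ T.erase i, ((g i) ^ 2 - (g j) ^ 2)) from by ring,
      div_neg, ← sub_eq_add_neg, ← sub_div, mul_assoc]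
  rw [Finset.sum_congr rfl hpair]
  exact aux_main T g k hcardT hsinj hs1 hg0 F hFdeg hF1
end
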